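/- arXiv:1411.4092 — 9 statements merged into one kernel-verified Lean document; each statement's English description precedes it below -/
import Mathlib

section
/- For coprime positive integers a and b, the inversion number inv(a,b) of the permutation x ↦ a·x mod b on {1,...,b} satisfies inv(a,b) = -3·b·s(a,b) + (b-1)(b-2)/4, where s(a,b) is the Dedekind sum. -/
/-- The sawtooth function ((x)): 0 if x is an integer, else x - ⌊x⌋ - 1/2. -/
def sawtooth (x : ℚ) : ℚ := if x.den = 1 then 0 else x - ⌊x⌋ - 1/2

/-- The Dedekind sum s(a,b) = ∑_{i=1}^{b-1} (i/b)·((a·i/b)). -/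
def dedekindSum (a b : ℕ) : ℚ :=
  ∑ i ∈ Finset.Icc 1 (b - 1), (i : ℚ) / (b : ℚ) * sawtooth ((a * i : ℕ) / (b : ℚ))

/-- Representative of a·x mod b in {1, ..., b}. -/
def modRep (a b x : ℕ) : ℕ := if a * x % b = 0 then b else a * x % b

/-- inv(a,b): number of pairs 1 ≤ i < j ≤ b with a·i mod b > a·j mod b
(representatives in {1,...,b}). -/
def invNum (a b : ℕ) : ℕ :=
  ((Finset.Icc 1 b ×ˢ Finset.Icc 1 b).filter
    (fun p => p.1 < p.2 ∧ modRep a b p.2 < modRep a b p.1)).card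

open Finset

lemma gauss (n : ℕ) : ∑ i ∈ Finset.Icc 1 n, (i:ℚ) = n*(n+1)/2 := by
  induction n with
  | zero => simp
  | succ n ih =>
    rw [Finset.sum_Icc_succ_top (by omega), ih]
    push_cast; ring

lemma saw_eval {n b : ℕ} (hb : 0 < b) (h : ¬ b ∣ n) :
    sawtooth ((n : ℚ) / b) = ((n % b : ℕ) : ℚ) / b - 1/2 := by
  have hq : b * (n / b) + n % b = n := Nat.div_add_mod n b
  set q := n / b with hqd
  set r := n % b with hrd
  have hr0 : 0 < r := Nat.pos_of_ne_zero (fun h0 => h (Nat.dvd_of_mod_eq_zero h0))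
  have hrb : r < b := Nat.mod_lt _ hb
  have hb' : (b:ℚ) ≠ 0 := by positivity
  have hx : (n : ℚ)/b = (q:ℚ) + (r:ℚ) / b := by
    have : (n:ℚ) = (b:ℚ)*q + r := by exact_mod_cast hq.symm
    rw [this]; field_simp
  have hr01 : (0:ℚ) < (r:ℚ)/b ∧ (r:ℚ)/b < 1 := by
    constructor
    · positivity
    · rw [div_lt_one (by positivity)]; exact_mod_cast hrb
  have hden : ((n:ℚ)/b).den ≠ 1 := by
    intro hd
    have hz : (((((n:ℚ)/b).num : ℤ)) : ℚ) = (n:ℚ)/b := (Rat.den_eq_one_iff _).mp hd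
    set z := ((n:ℚ)/b).num
    have h1 : (z:ℚ) - q = (r:ℚ)/b := by rw [hx] at hz; linarith [hz]
    have h2 : ((z - (q:ℤ) : ℤ) : ℚ) = (r:ℚ)/b := by push_cast; linarith [h1]
    have h5 : (0:ℤ) < z - q := by exact_mod_cast h2 ▸ hr01.1
    have h6 : (z - (q:ℤ)) < 1 := by exact_mod_cast h2 ▸ hr01.2
    omega
  have hfl : ⌊(n:ℚ)/b⌋ = (q:ℤ) := by
    rw [hx]
    rw [show ((q:ℚ)) = (((q:ℤ):ℚ)) by push_cast; ring]
    rw [Int.floor_intCast_add]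
    have : ⌊(r:ℚ)/b⌋ = 0 := Int.floor_eq_zero_iff.mpr ⟨le_of_lt hr01.1, hr01.2⟩
    omega
  rw [sawtooth, if_neg hden, hfl, hx]
  push_cast; ring

lemma sum_swap_tri (n : ℕ) (f : ℕ → ℚ) :
    ∑ j ∈ Icc 1 n, ∑ i ∈ Icc 1 (j-1), f i = ∑ i ∈ Icc 1 n, ((n - i : ℕ):ℚ) * f i := by
  have h1 : ∀ j ∈ Icc 1 n, ∑ i ∈ Icc 1 (j-1), f i
      = ∑ i ∈ Icc 1 n, (if i ≤ j - 1 then f i else 0) := by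
    intro j hj
    rw [mem_Icc] at hj
    rw [← Finset.sum_filter]
    congr 1
    ext i
    simp only [mem_Icc, mem_filter]
    omega
  rw [Finset.sum_congr rfl h1, Finset.sum_comm]
  refine Finset.sum_congr rfl (fun i hi => ?_)
  rw [mem_Icc] at hi
  rw [← Finset.sum_filter]
  have : Finset.filter (fun j => i ≤ j - 1) (Icc 1 n) = Icc (i+1) n := by
    ext j; simp only [mem_Icc, mem_filter]; omega
  rw [this, Finset.sum_const, Nat.card_Icc]
  have : n + 1 - (i + 1) = n - i := by omega
  rw [this, nsmul_eq_mul]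

lemma two_case {b s t : ℕ} (h : s % b = t) (hs : s < 2*b) :
    s = t ∨ s = t + b := by
  rcases Nat.lt_or_ge s b with hlt | hge
  · left; rw [Nat.mod_eq_of_lt hlt] at h; omega
  · right
    rw [Nat.mod_eq_sub_mod hge, Nat.mod_eq_of_lt (by omega)] at h
    omega

theorem stmt0 (a b : ℕ) (hb : 1 ≤ b) (h : Nat.Coprime a b) :
    (invNum a b : ℚ) = -3 * b * dedekindSum a b + ((b : ℚ) - 1) * ((b : ℚ) - 2) / 4 := by
  have hb0 : 0 < b := hb
  have hbq : (b:ℚ) ≠ 0 := by positivity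
  set F : ℕ → ℚ := fun k => sawtooth ((a * k : ℕ) / (b : ℚ)) with hFdef
  -- basic mod facts
  have hnd : ∀ k, 1 ≤ k → k ≤ b - 1 → ¬ b ∣ a * k := by
    intro k hk1 hk2 hd
    have hbk : b ∣ k := (h.symm.dvd_mul_left).mp hd
    have := Nat.le_of_dvd (by omega) hbk
    omega
  have hmod : ∀ k, 1 ≤ k → k ≤ b - 1 → (1 ≤ a*k % b ∧ a*k % b ≤ b - 1) := by
    intro k hk1 hk2
    have h1 : a*k % b ≠ 0 := fun h0 => hnd k hk1 hk2 (Nat.dvd_of_mod_eq_zero h0)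
    have h2 : a*k % b < b := Nat.mod_lt _ hb0
    omega
  have hF : ∀ k, 1 ≤ k → k ≤ b - 1 → F k = ((a*k % b : ℕ):ℚ)/b - 1/2 := by
    intro k hk1 hk2
    exact saw_eval hb0 (hnd k hk1 hk2)
  -- key pointwise identity
  have hkey : ∀ i j, 1 ≤ i → i < j → j ≤ b - 1 →
      (if modRep a b j < modRep a b i then (1:ℚ) else 0) = F (j-i) - F j + F i + 1/2 := by
    intro i j hi1 hij hj2
    have hui := hmod i hi1 (by omega)
    have hvj := hmod j (by omega) hj2
    have hwd := hmod (j-i) (by omega) (by omega)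
    set u := a*i % b
    set v := a*j % b
    set w := a*(j-i) % b
    have hsum : (w + u) % b = v := by
      have e : a*(j-i) + a*i = a*j := by
        rw [← Nat.mul_add]; congr 1; omega
      calc (w + u) % b = (a*(j-i) + a*i) % b := by
            conv_rhs => rw [Nat.add_mod]
          _ = v := by rw [e]
    have hmi : modRep a b i = u := by
      rw [modRep, if_neg (by omega)]
    have hmj : modRep a b j = v := by
      rw [modRep, if_neg (by omega)]
    rw [hmi, hmj, hF i hi1 (by omega), hF j (by omega) hj2, hF (j-i) (by omega) (by omega)]
    rcases two_case hsum (by omega) with hc | hc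
    · rw [if_neg (by omega)]
      have hcq : (v:ℚ) = (w:ℚ) + (u:ℚ) := by exact_mod_cast hc.symm
      rw [hcq]; ring
    · rw [if_pos (by omega)]
      have hcq : (w:ℚ) + (u:ℚ) = (v:ℚ) + (b:ℚ) := by exact_mod_cast hc
      field_simp
      linarith
  -- S0 = 0
  have hS0 : ∑ i ∈ Icc 1 (b-1), F i = 0 := by
    have pair : ∀ d, 1 ≤ d → d ≤ b - 1 → F d + F (b - d) = 0 := by
      intro d hd1 hd2
      have hu := hmod d hd1 hd2
      have hw := hmod (b-d) (by omega) (by omega)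
      set u := a*d % b
      set w := a*(b-d) % b
      have hsum : (u + w) % b = 0 := by
        have e : a*d + a*(b-d) = a*b := by rw [← Nat.mul_add]; congr 1; omega
        calc (u + w) % b = (a*d + a*(b-d)) % b := by
              conv_rhs => rw [Nat.add_mod]
            _ = 0 := by rw [e]; exact Nat.mul_mod_left a b
      have : u + w = b := by
        rcases two_case hsum (by omega) with hc | hc <;> omega
      have hq : (u:ℚ) + (w:ℚ) = (b:ℚ) := by exact_mod_cast this
      rw [hF d hd1 hd2, hF (b-d) (by omega) (by omega)]
      field_simp
      linarith
    refine Finset.sum_involution (fun d _ => b - d) ?_ ?_ ?_ ?_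
    · intro d hd
      rw [mem_Icc] at hd
      exact pair d hd.1 hd.2
    · intro d hd hne heq
      rw [mem_Icc] at hd
      have heq' : b - d = d := heq
      have := pair d hd.1 hd.2
      rw [heq'] at this
      apply hne; linarith
    · intro d hd
      rw [mem_Icc] at hd
      show b - d ∈ Icc 1 (b-1)
      rw [mem_Icc]
      omega
    · intro d hd
      rw [mem_Icc] at hd
      show b - (b - d) = d
      omega
  -- S1 = b * dedekindSum
  have hS1 : ∑ i ∈ Icc 1 (b-1), (i:ℚ) * F i = b * dedekindSum a b := by
    rw [dedekindSum, Finset.mul_sum]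
    refine Finset.sum_congr rfl (fun i _ => ?_)
    rw [hFdef]
    field_simp
  -- Step 1 : reduce invNum to nested sums
  have hrest : ((Finset.Icc 1 b ×ˢ Finset.Icc 1 b).filter
      (fun p => p.1 < p.2 ∧ modRep a b p.2 < modRep a b p.1)) =
      ((Finset.Icc 1 (b-1) ×ˢ Finset.Icc 1 (b-1)).filter
      (fun p => p.1 < p.2 ∧ modRep a b p.2 < modRep a b p.1)) := by
    ext ⟨i, j⟩
    simp only [mem_filter, mem_product, mem_Icc]
    constructor
    · rintro ⟨⟨⟨hi1, hi2⟩, hj1, hj2⟩, hij, hinv⟩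
      have hjb : j ≠ b := by
        intro hjb
        have h1 : modRep a b b = b := by
          rw [modRep, if_pos (Nat.mul_mod_left a b)]
        have h2 : modRep a b i ≤ b := by
          rw [modRep]; split
          · exact le_rfl
          · exact (Nat.mod_lt _ hb0).le
        rw [hjb] at hinv
        omega
      exact ⟨⟨⟨hi1, by omega⟩, hj1, by omega⟩, hij, hinv⟩
    · rintro ⟨⟨⟨hi1, hi2⟩, hj1, hj2⟩, hij, hinv⟩
      exact ⟨⟨⟨hi1, by omega⟩, hj1, by omega⟩, hij, hinv⟩
  have step1 : (invNum a b : ℚ) =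
      ∑ j ∈ Icc 1 (b-1), ∑ i ∈ Icc 1 (j-1),
        (if modRep a b j < modRep a b i then (1:ℚ) else 0) := by
    rw [invNum, hrest, Finset.card_filter]
    push_cast
    rw [Finset.sum_product, Finset.sum_comm]
    refine Finset.sum_congr rfl (fun j hj => ?_)
    rw [mem_Icc] at hj
    have : ∀ i, (if i < j ∧ modRep a b j < modRep a b i then (1:ℚ) else 0)
        = if i < j then (if modRep a b j < modRep a b i then (1:ℚ) else 0) else 0 := by
      intro i; rw [ite_and]
    simp only [this]
    rw [← Finset.sum_filter]
    congr 1
    ext i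
    simp only [mem_Icc, mem_filter]
    omega
  -- Step 2/3 : rewrite inner sums
  have step2 : (invNum a b : ℚ) =
      ∑ j ∈ Icc 1 (b-1), (2 * (∑ i ∈ Icc 1 (j-1), F i) + ((j-1:ℕ):ℚ) * (1/2 - F j)) := by
    rw [step1]
    refine Finset.sum_congr rfl (fun j hj => ?_)
    rw [mem_Icc] at hj
    have e1 : ∑ i ∈ Icc 1 (j-1), (if modRep a b j < modRep a b i then (1:ℚ) else 0)
        = ∑ i ∈ Icc 1 (j-1), (F (j-i) + F i + (1/2 - F j)) := by
      refine Finset.sum_congr rfl (fun i hi => ?_)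
      rw [mem_Icc] at hi
      rw [hkey i j hi.1 (by omega) hj.2]
      ring
    rw [e1, Finset.sum_add_distrib, Finset.sum_add_distrib]
    have e2 : ∑ i ∈ Icc 1 (j-1), F (j - i) = ∑ i ∈ Icc 1 (j-1), F i := by
      refine Finset.sum_nbij' (fun x => j - x) (fun x => j - x) ?_ ?_ ?_ ?_ ?_
      · intro x hx; rw [mem_Icc] at hx; simp only [mem_Icc]; omega
      · intro x hx; rw [mem_Icc] at hx; simp only [mem_Icc]; omega
      · intro x hx; rw [mem_Icc] at hx; beta_reduce; omega
      · intro x hx; rw [mem_Icc] at hx; beta_reduce; omega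
      · intro x hx; rfl
    rw [e2, Finset.sum_const, Nat.card_Icc]
    have : j - 1 + 1 - 1 = j - 1 := by omega
    rw [this, nsmul_eq_mul]
    ring
  -- Step 4 : swap and conclude
  have step4 : (invNum a b : ℚ) =
      2 * ∑ i ∈ Icc 1 (b-1), ((b-1-i:ℕ):ℚ) * F i
        + ∑ j ∈ Icc 1 (b-1), ((j-1:ℕ):ℚ) * (1/2 - F j) := by
    rw [step2, Finset.sum_add_distrib, ← Finset.mul_sum, sum_swap_tri]
  rw [step4]
  have recast : ∀ i ∈ Icc 1 (b-1),
      2 * (((b-1-i:ℕ):ℚ) * F i) = 2*((b:ℚ) - 1 - i) * F i := by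
    intro i hi
    rw [mem_Icc] at hi
    have : ((b-1-i:ℕ):ℚ) = (b:ℚ) - 1 - i := by
      have h1 : ((b-1-i:ℕ):ℚ) = ((b-1:ℕ):ℚ) - (i:ℚ) := by
        rw [Nat.cast_sub hi.2]
      rw [h1, Nat.cast_sub hb]
      push_cast; ring
    rw [this]; ring
  have recast2 : ∀ j ∈ Icc 1 (b-1),
      ((j-1:ℕ):ℚ) * (1/2 - F j) = ((j:ℚ) - 1) * (1/2 - F j) := by
    intro j hj
    rw [mem_Icc] at hj
    rw [Nat.cast_sub hj.1]
    push_cast; ring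
  rw [Finset.mul_sum, Finset.sum_congr rfl recast, Finset.sum_congr rfl recast2]
  have expand : ∀ i ∈ Icc 1 (b-1),
      2*((b:ℚ) - 1 - i) * F i + ((i:ℚ) - 1) * (1/2 - F i)
        = ((2*(b:ℚ) - 1) * F i - 3 * ((i:ℚ) * F i)) + (((i:ℚ) - 1) * (1/2)) := by
    intro i _; ring
  rw [← Finset.sum_add_distrib, Finset.sum_congr rfl expand, Finset.sum_add_distrib,
    Finset.sum_sub_distrib, ← Finset.mul_sum, ← Finset.mul_sum, hS0, hS1]
  have e5 : ∑ i ∈ Icc 1 (b-1), (((i:ℚ) - 1) * (1/2))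
      = ((∑ i ∈ Icc 1 (b-1), (i:ℚ)) - ((b-1:ℕ):ℚ)) * (1/2) := by
    rw [← Finset.sum_mul, Finset.sum_sub_distrib, Finset.sum_const, Nat.card_Icc]
    simp
  rw [e5, gauss]
  have hc1 : ((b-1:ℕ):ℚ) = (b:ℚ) - 1 := by
    rw [Nat.cast_sub hb]; push_cast; ring
  rw [hc1]
  ring
end

section
/- For b ≥ 1 and a coprime to b, inv(a,b) + inv(-a,b) = (b-1)(b-2)/2, where -a is interpreted as b - a mod b. -/
lemma count_lt (n : ℕ) :
    ((Finset.Icc 1 n ×ˢ Finset.Icc 1 n).filter (fun p : ℕ × ℕ => p.1 < p.2)).card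
      = n * (n - 1) / 2 := by
  rw [Finset.card_filter, Finset.sum_product]
  have h1 : ∀ i ∈ Finset.Icc 1 n, (∑ j ∈ Finset.Icc 1 n, if i < j then 1 else 0) = n - i := by
    intro i hi
    simp only [Finset.mem_Icc] at hi
    rw [Finset.sum_boole]
    have : (Finset.Icc 1 n).filter (fun j => i < j) = Finset.Icc (i+1) n := by
      ext j; simp only [Finset.mem_filter, Finset.mem_Icc]; omega
    rw [this, Nat.card_Icc]
    simp only [Nat.cast_id]
    omega
  rw [Finset.sum_congr rfl h1]
  have hIcc : Finset.Icc 1 n = Finset.Ico 1 (n + 1) := by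
    ext x; simp [Nat.lt_succ_iff]
  have h2 : ∑ i ∈ Finset.Icc 1 n, (n - i) = ∑ i ∈ Finset.range n, (n - (1 + i)) := by
    rw [hIcc, Finset.sum_Ico_eq_sum_range]
    simp
  rw [h2]
  have h3 : ∀ i ∈ Finset.range n, n - (1 + i) = n - 1 - i := by intro i _; omega
  rw [Finset.sum_congr rfl h3, Finset.sum_range_reflect (fun i => i) n, Finset.sum_range_id]

theorem stmt3 (a b : ℕ) (hb : 1 ≤ b) (h : Nat.Coprime a b) :
    invNum a b + invNum (b - a % b) b = (b - 1) * (b - 2) / 2 := by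
  rcases Nat.lt_or_ge 1 b with hb2 | hb1
  case inr =>
    interval_cases b
    have he : ∀ c : ℕ, invNum c 1 = 0 := by
      intro c
      unfold invNum
      rw [Finset.card_eq_zero, Finset.filter_eq_empty_iff]
      rintro ⟨i, j⟩ hp
      simp only [Finset.mem_product, Finset.mem_Icc] at hp
      rintro ⟨h1, -⟩
      omega
    simp [he]
  have hb0 : 0 < b := by omega
  have ha0 : a % b ≠ 0 := by
    intro h0
    have hdvd : b ∣ a := Nat.dvd_of_mod_eq_zero h0
    have h1 : b ∣ Nat.gcd a b := Nat.dvd_gcd hdvd dvd_rfl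
    rw [h] at h1
    have := Nat.le_of_dvd one_pos h1
    omega
  set a' := b - a % b with ha'
  have hax : ∀ x, 1 ≤ x → x < b → 1 ≤ a * x % b := by
    intro x h1 h2
    rcases Nat.eq_zero_or_pos (a * x % b) with h0 | h0
    · exfalso
      have hd : b ∣ a * x := Nat.dvd_of_mod_eq_zero h0
      have hd2 : b ∣ x := Nat.Coprime.dvd_of_dvd_mul_left h.symm hd
      have := Nat.le_of_dvd (by omega) hd2
      omega
    · exact h0
  have ha'x : ∀ x, 1 ≤ x → x < b → a' * x % b = b - a * x % b := by
    intro x h1 h2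
    have h3 : a' + a % b = b := by
      have := Nat.mod_lt a hb0; omega
    have hmm : a * x ≡ a % b * x [MOD b] := (Nat.mod_modEq a b).symm.mul_right x
    have h6 : a' * x + a * x ≡ 0 [MOD b] := by
      calc a' * x + a * x ≡ a' * x + a % b * x [MOD b] := Nat.ModEq.add_left _ hmm
        _ = b * x := by rw [← add_mul, h3]
        _ ≡ 0 [MOD b] := (Nat.modEq_zero_iff_dvd).mpr ⟨x, rfl⟩
    have hsum : (a' * x + a * x) % b = 0 := by simpa [Nat.ModEq] using h6
    have hdvd : b ∣ (a' * x % b + a * x % b) := by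
      apply Nat.dvd_of_mod_eq_zero
      rwa [← Nat.add_mod]
    have h7 := hax x h1 h2
    have h8 : a * x % b < b := Nat.mod_lt _ hb0
    have h9 : a' * x % b < b := Nat.mod_lt _ hb0
    obtain ⟨k, hk⟩ := hdvd
    have hklt : b * k < b * 2 := by omega
    have hk2 : k < 2 := Nat.lt_of_mul_lt_mul_left hklt
    have hk0 : k ≠ 0 := by rintro rfl; omega
    have hk1 : k = 1 := by omega
    rw [hk1] at hk
    omega
  have hinj : ∀ i j, 1 ≤ i → i < b → 1 ≤ j → j < b → a * i % b = a * j % b → i = j := by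
    intro i j hi1 hi2 hj1 hj2 heq
    have hmod : i ≡ j [MOD b] := Nat.ModEq.cancel_left_of_coprime (by rwa [Nat.gcd_comm]) heq
    have h1 : i % b = i := Nat.mod_eq_of_lt hi2
    have h2 : j % b = j := Nat.mod_eq_of_lt hj2
    unfold Nat.ModEq at hmod
    omega
  have hm : ∀ x, 1 ≤ x → x < b → modRep a b x = a * x % b := by
    intro x h1 h2
    unfold modRep
    rw [if_neg (by have := hax x h1 h2; omega)]
  have hm' : ∀ x, 1 ≤ x → x < b → modRep a' b x = b - a * x % b := by
    intro x h1 h2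
    have e := ha'x x h1 h2
    have h7 := hax x h1 h2
    unfold modRep
    rw [e, if_neg (by have : a * x % b < b := Nat.mod_lt _ hb0; omega)]
  have hmb : ∀ c : ℕ, modRep c b b = b := by
    intro c
    unfold modRep
    rw [if_pos (Nat.mul_mod_left c b)]
  have hS : (Finset.Icc 1 b ×ˢ Finset.Icc 1 b).filter
      (fun p => p.1 < p.2 ∧ modRep a b p.2 < modRep a b p.1)
      = ((Finset.Icc 1 (b-1) ×ˢ Finset.Icc 1 (b-1)).filter (fun p : ℕ × ℕ => p.1 < p.2)).filter
        (fun p => modRep a b p.2 < modRep a b p.1) := by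
    rw [Finset.filter_filter]
    ext p
    simp only [Finset.mem_filter, Finset.mem_product, Finset.mem_Icc]
    constructor
    · rintro ⟨⟨⟨h1, h2⟩, ⟨h3, h4⟩⟩, h5, h6⟩
      have hp2 : p.2 < b := by
        by_contra hc
        have hpe : p.2 = b := by omega
        rw [hpe, hmb a] at h6
        have e1 := hm p.1 h1 (by omega)
        have e2 : a * p.1 % b < b := Nat.mod_lt _ hb0
        omega
      exact ⟨⟨⟨h1, by omega⟩, ⟨h3, by omega⟩⟩, h5, h6⟩
    · rintro ⟨⟨⟨h1, h2⟩, ⟨h3, h4⟩⟩, h5, h6⟩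
      exact ⟨⟨⟨h1, by omega⟩, ⟨h3, by omega⟩⟩, h5, h6⟩
  have hS' : (Finset.Icc 1 b ×ˢ Finset.Icc 1 b).filter
      (fun p => p.1 < p.2 ∧ modRep a' b p.2 < modRep a' b p.1)
      = ((Finset.Icc 1 (b-1) ×ˢ Finset.Icc 1 (b-1)).filter (fun p : ℕ × ℕ => p.1 < p.2)).filter
        (fun p => ¬ modRep a b p.2 < modRep a b p.1) := by
    rw [Finset.filter_filter]
    ext p
    simp only [Finset.mem_filter, Finset.mem_product, Finset.mem_Icc]
    constructor
    · rintro ⟨⟨⟨h1, h2⟩, ⟨h3, h4⟩⟩, h5, h6⟩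
      have hp2 : p.2 < b := by
        by_contra hc
        have hpe : p.2 = b := by omega
        rw [hpe, hmb a'] at h6
        have e1 := hm' p.1 h1 (by omega)
        have e2 := hax p.1 h1 (by omega)
        omega
      have hp1 : p.1 < b := by omega
      have e1 := hm p.1 h1 hp1
      have e2 := hm p.2 h3 hp2
      have f1 := hm' p.1 h1 hp1
      have f2 := hm' p.2 h3 hp2
      have e3 : a * p.1 % b < b := Nat.mod_lt _ hb0
      have e4 : a * p.2 % b < b := Nat.mod_lt _ hb0
      have g1 := hax p.1 h1 hp1
      have g2 := hax p.2 h3 hp2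
      have hne : a * p.1 % b ≠ a * p.2 % b := fun hc => by
        have := hinj p.1 p.2 h1 hp1 h3 hp2 hc; omega
      exact ⟨⟨⟨h1, by omega⟩, ⟨h3, by omega⟩⟩, h5, by omega⟩
    · rintro ⟨⟨⟨h1, h2⟩, ⟨h3, h4⟩⟩, h5, h6⟩
      have hp1 : p.1 < b := by omega
      have hp2 : p.2 < b := by omega
      have e1 := hm p.1 h1 hp1
      have e2 := hm p.2 h3 hp2
      have f1 := hm' p.1 h1 hp1
      have f2 := hm' p.2 h3 hp2
      have g1 := hax p.1 h1 hp1
      have g2 := hax p.2 h3 hp2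
      have e3 : a * p.1 % b < b := Nat.mod_lt _ hb0
      have e4 : a * p.2 % b < b := Nat.mod_lt _ hb0
      have hne : a * p.1 % b ≠ a * p.2 % b := fun hc => by
        have := hinj p.1 p.2 h1 hp1 h3 hp2 hc; omega
      exact ⟨⟨⟨h1, by omega⟩, ⟨h3, by omega⟩⟩, h5, by omega⟩
  rw [invNum, invNum, hS, hS',
    Finset.card_filter_add_card_filter_not, count_lt]
  have : b - 1 - 1 = b - 2 := by omega
  rw [this]
end

section
/- For b ≥ 1 and a coprime to b, inv(a,b) = (b-1)(b-2)/2 if and only if a ≡ -1 (mod b). -/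
open Finset

lemma aux_card_ltPairs (n : ℕ) :
    ((Icc 1 n ×ˢ Icc 1 n).filter (fun p => p.1 < p.2)).card = n * (n - 1) / 2 := by
  rw [Finset.card_eq_sum_card_fiberwise (f := Prod.snd) (t := Icc 1 n)
    (fun x hx => (mem_product.mp (mem_filter.mp hx).1).2)]
  have key : ∀ j ∈ Icc 1 n,
      (((Icc 1 n ×ˢ Icc 1 n).filter (fun p => p.1 < p.2)).filter
        (fun x => x.2 = j)).card = j - 1 := by
    intro j hj
    have hj' := mem_Icc.mp hj
    have heq : (((Icc 1 n ×ˢ Icc 1 n).filter (fun p => p.1 < p.2)).filter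
        (fun x => x.2 = j)) = Icc 1 (j-1) ×ˢ {j} := by
      ext p
      simp only [mem_filter, mem_product, mem_Icc, mem_singleton]
      omega
    rw [heq, card_product, Nat.card_Icc, card_singleton]
    omega
  rw [Finset.sum_congr rfl key]
  rw [← Finset.Ico_add_one_right_eq_Icc, Finset.sum_Ico_eq_sum_range]
  have : ∀ k ∈ range (n + 1 - 1), 1 + k - 1 = k := by intro k _; omega
  rw [Finset.sum_congr rfl this]
  have hn : n + 1 - 1 = n := by omega
  rw [hn, Finset.sum_range_id]

lemma aux_modRep_le (a b x : ℕ) (hb : 1 ≤ b) : modRep a b x ≤ b := by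
  have := Nat.mod_lt (a * x) (y := b) (by omega)
  unfold modRep; split <;> omega

lemma aux_modRep_pos (a b x : ℕ) (hb : 1 ≤ b) : 1 ≤ modRep a b x := by
  unfold modRep; split <;> omega

lemma aux_modRep_self (a b : ℕ) : modRep a b b = b := by
  unfold modRep
  simp [Nat.mul_mod_left]

lemma aux_modRep_coprime (a b x : ℕ) (h : Nat.Coprime a b) (hx1 : 1 ≤ x)
    (hx2 : x ≤ b - 1) : a * x % b ≠ 0 := by
  intro h0
  have hd : b ∣ a * x := Nat.dvd_of_mod_eq_zero h0
  have hbx : b ∣ x := (Nat.Coprime.dvd_of_dvd_mul_left (Nat.Coprime.symm h)) hd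
  have := Nat.le_of_dvd (by omega) hbx
  omega

lemma aux_modRep_neg (a b x : ℕ) (ha : (a + 1) % b = 0) (hx1 : 1 ≤ x)
    (hx2 : x ≤ b - 1) : modRep a b x = b - x := by
  have hb : 2 ≤ b := by
    by_contra hc
    interval_cases b <;> omega
  have key : a * x % b = b - x := by
    have h1 : (a * x + x) % b = 0 := by
      have he : a * x + x = (a + 1) * x := by ring
      rw [he, Nat.mul_mod, ha]
      simp
    have h2 : ((b - x) + x) % b = 0 := by
      have he : (b - x) + x = b := by omega
      simp [he]
    have h3 : a * x + x ≡ (b - x) + x [MOD b] := by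
      show (a * x + x) % b = ((b - x) + x) % b
      rw [h1, h2]
    have h4 : a * x ≡ b - x [MOD b] := Nat.ModEq.add_right_cancel' x h3
    have h5 : (b - x) % b = b - x := Nat.mod_eq_of_lt (by omega)
    calc a * x % b = (b - x) % b := h4
    _ = b - x := h5
  unfold modRep
  rw [key]
  have : b - x ≠ 0 := by omega
  simp [this]

theorem stmt5 (a b : ℕ) (hb : 1 ≤ b) (h : Nat.Coprime a b) :
    invNum a b = (b - 1) * (b - 2) / 2 ↔ (a + 1) % b = 0 := by
  set F := (Icc 1 b ×ˢ Icc 1 b).filter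
    (fun p => p.1 < p.2 ∧ modRep a b p.2 < modRep a b p.1) with hF
  set T := (Icc 1 (b-1) ×ˢ Icc 1 (b-1)).filter (fun p => p.1 < p.2) with hT
  have hTcard : T.card = (b - 1) * (b - 2) / 2 := by
    rw [hT, aux_card_ltPairs]
    congr 2
  have hFT : F ⊆ T := by
    intro p hp
    simp only [hF, mem_filter, mem_product, mem_Icc] at hp
    simp only [hT, mem_filter, mem_product, mem_Icc]
    obtain ⟨⟨⟨h11, h12⟩, h21, h22⟩, hlt, hinv⟩ := hp
    have hp2 : p.2 ≤ b - 1 := by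
      by_contra hc
      have hpb : p.2 = b := by omega
      rw [hpb, aux_modRep_self] at hinv
      have := aux_modRep_le a b p.1 hb
      omega
    refine ⟨⟨⟨h11, by omega⟩, h21, hp2⟩, hlt⟩
  constructor
  · -- forward
    intro hinv
    rcases Nat.lt_or_ge b 3 with hb3 | hb3
    · -- b = 1 or b = 2
      interval_cases b
      · simp [Nat.mod_one]
      · -- b = 2 : a is odd
        have ha2 : a % 2 ≠ 0 := by
          intro h0
          have : (2 : ℕ) ∣ a := Nat.dvd_of_mod_eq_zero h0
          have : (2 : ℕ) ∣ Nat.gcd a 2 := Nat.dvd_gcd this dvd_rfl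
          rw [h] at this
          omega
        omega
    · -- b ≥ 3
      have hFeq : F = T := by
        apply Finset.eq_of_subset_of_card_le hFT
        rw [hTcard]
        exact le_of_eq hinv.symm
      have hdec : ∀ i j : ℕ, 1 ≤ i → i < j → j ≤ b - 1 →
          modRep a b j < modRep a b i := by
        intro i j hi hij hj
        have hmem : (i, j) ∈ T := by
          simp only [hT, mem_filter, mem_product, mem_Icc]
          omega
        rw [← hFeq] at hmem
        simp only [hF, mem_filter] at hmem
        exact hmem.2.2
      -- modRep a b 1 = a % b
      have hm1 : modRep a b 1 = a % b := by
        have hne : a * 1 % b ≠ 0 := aux_modRep_coprime a b 1 h le_rfl (by omega)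
        have hne' : a % b ≠ 0 := by rwa [Nat.mul_one] at hne
        unfold modRep
        rw [Nat.mul_one, if_neg hne']
      have hm1le : a % b ≤ b - 1 := by
        have := Nat.mod_lt a (y := b) (by omega)
        omega
      -- image of Icc 2 (b-1)
      set D := (Icc 2 (b-1)).image (fun x => modRep a b x) with hD
      have hinj : Set.InjOn (fun x => modRep a b x) ↑(Icc 2 (b-1)) := by
        intro x hx y hy hxy
        simp only [coe_Icc, Set.mem_Icc] at hx hy
        by_contra hne
        have hxy' : modRep a b x = modRep a b y := hxy
        rcases Nat.lt_or_ge x y with hlt | hge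
        · have := hdec x y (by omega) hlt (by omega); omega
        · have hlt : y < x := by omega
          have := hdec y x (by omega) hlt (by omega); omega
      have hDcard : D.card = b - 2 := by
        rw [hD, Finset.card_image_of_injOn hinj, Nat.card_Icc]
        omega
      have hDsub : D ⊆ Icc 1 (modRep a b 1 - 1) := by
        intro y hy
        simp only [hD, mem_image, mem_Icc] at hy ⊢
        obtain ⟨x, hx, hxy⟩ := hy
        have h1 := aux_modRep_pos a b x hb
        have h2 := hdec 1 x le_rfl (by omega) (by omega)
        omega
      have hcard := Finset.card_le_card hDsub
      rw [hDcard, Nat.card_Icc] at hcard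
      have hge : b - 1 ≤ modRep a b 1 := by omega
      have hab : a % b = b - 1 := by omega
      -- conclude (a+1) % b = 0
      have h1b : 1 % b = 1 := Nat.mod_eq_of_lt (by omega)
      rw [Nat.add_mod, h1b, hab]
      have : b - 1 + 1 = b := by omega
      rw [this, Nat.mod_self]
  · -- backward
    intro ha
    have hTF : T ⊆ F := by
      intro p hp
      simp only [hT, mem_filter, mem_product, mem_Icc] at hp
      simp only [hF, mem_filter, mem_product, mem_Icc]
      obtain ⟨⟨⟨h11, h12⟩, h21, h22⟩, hlt⟩ := hp
      have e1 := aux_modRep_neg a b p.1 ha h11 h12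
      have e2 := aux_modRep_neg a b p.2 ha h21 h22
      refine ⟨⟨⟨h11, by omega⟩, h21, by omega⟩, hlt, by omega⟩
    have : F = T := Finset.Subset.antisymm hFT hTF
    rw [invNum, ← hF, this, hTcard]
end

section
/- For coprime integers a, b with b ≥ 1 and a coprime to b, if 3 does not divide b, then 3 divides inv(a,b). -/
/-- A finset carrying a fixed-point-free map of order 3 has cardinality divisible by 3. -/
lemma three_dvd_card {α : Type*} [DecidableEq α] :
    ∀ s : Finset α, ∀ f : α → α, (∀ x ∈ s, f x ∈ s) → (∀ x ∈ s, f (f (f x)) = x) →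
    (∀ x ∈ s, f x ≠ x) → 3 ∣ s.card := by
  intro s
  induction s using Finset.strongInduction with
  | _ s ih =>
    intro f hmem h3 hfix
    rcases s.eq_empty_or_nonempty with rfl | ⟨x, hx⟩
    · simp
    · have hfx : f x ∈ s := hmem x hx
      have hffx : f (f x) ∈ s := hmem _ hfx
      have h1 : f x ≠ x := hfix x hx
      have h2 : f (f x) ≠ f x := hfix _ hfx
      have h3x : f (f (f x)) = x := h3 x hx
      have h4 : f (f x) ≠ x := by
        intro he
        have : f (f (f x)) = f x := by rw [he]
        exact h1 (this.symm.trans h3x)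
      have hsub : ({x, f x, f (f x)} : Finset α) ⊆ s := by
        intro y hy
        simp only [Finset.mem_insert, Finset.mem_singleton] at hy
        rcases hy with rfl | rfl | rfl <;> assumption
      have hcard3 : ({x, f x, f (f x)} : Finset α).card = 3 := by
        rw [Finset.card_insert_of_notMem (by simp [Ne.symm h1, Ne.symm h4]),
            Finset.card_insert_of_notMem (by simp [Ne.symm h2]), Finset.card_singleton]
      set t := s \ {x, f x, f (f x)} with ht
      have hts : t ⊂ s := Finset.sdiff_ssubset hsub (by simp)
      have htmem : ∀ y ∈ t, f y ∈ t := by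
        intro y hy
        rw [ht, Finset.mem_sdiff] at hy ⊢
        obtain ⟨hys, hyn⟩ := hy
        refine ⟨hmem y hys, ?_⟩
        simp only [Finset.mem_insert, Finset.mem_singleton] at hyn ⊢
        push_neg at hyn ⊢
        obtain ⟨n1, n2, n3⟩ := hyn
        have hy3 : f (f (f y)) = y := h3 y hys
        refine ⟨?_, ?_, ?_⟩
        · intro he; apply n3; rw [← hy3, he]
        · intro he; apply n1; rw [← hy3, he, h3x]
        · intro he; apply n2; rw [← hy3, he]; exact h3 (f x) hfx
      have hdvd : 3 ∣ t.card :=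
        ih t hts f htmem (fun y hy => h3 y (Finset.mem_sdiff.mp hy).1)
          (fun y hy => hfix y (Finset.mem_sdiff.mp hy).1)
      have hle : ({x, f x, f (f x)} : Finset α).card ≤ s.card := Finset.card_le_card hsub
      have hcard : s.card = t.card + 3 := by
        rw [ht, Finset.card_sdiff_of_subset hsub]; omega
      omega

theorem stmt6 (a b : ℕ) (hb : 1 ≤ b) (h : Nat.Coprime a b) (h3 : ¬ (3 ∣ b)) :
    3 ∣ invNum a b := by
  have hb0 : 0 < b := hb
  have hrpos : ∀ x, 1 ≤ x → x < b → a * x % b ≠ 0 := by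
    intro x hx1 hx2 h0
    have hd : b ∣ x * a := by rw [mul_comm]; exact Nat.dvd_of_mod_eq_zero h0
    have hbx : b ∣ x := Nat.Coprime.dvd_of_dvd_mul_right h.symm hd
    have := Nat.le_of_dvd hx1 hbx; omega
  have hmodRep : ∀ x, 1 ≤ x → x < b → modRep a b x = a * x % b := by
    intro x hx1 hx2; rw [modRep, if_neg (hrpos x hx1 hx2)]
  have hmodRep_le : ∀ x, modRep a b x ≤ b := by
    intro x; rw [modRep]; split
    · exact le_rfl
    · exact (Nat.mod_lt _ hb0).le
  unfold invNum
  set S : Finset (ℕ × ℕ) := (Finset.Icc 1 b ×ˢ Finset.Icc 1 b).filter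
    (fun p => p.1 < p.2 ∧ modRep a b p.2 < modRep a b p.1) with hSdef
  -- basic facts about members of S
  have hSfacts : ∀ p ∈ S, 1 ≤ p.1 ∧ p.1 < p.2 ∧ p.2 < b ∧
      a * p.2 % b < a * p.1 % b := by
    intro p hp
    rw [hSdef, Finset.mem_filter, Finset.mem_product, Finset.mem_Icc, Finset.mem_Icc] at hp
    obtain ⟨⟨⟨h11, h12⟩, h21, h22⟩, hlt, hinv⟩ := hp
    have hp2b : p.2 < b := by
      rcases Nat.lt_or_ge p.2 b with hc | hc
      · exact hc
      · exfalso
        have hp2 : p.2 = b := le_antisymm h22 hc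
        have hmb : modRep a b p.2 = b := by
          rw [hp2, modRep, if_pos (Nat.mul_mod_left a b)]
        have := hmodRep_le p.1; omega
    have hp1b : p.1 < b := lt_trans hlt hp2b
    rw [hmodRep p.2 h21 hp2b, hmodRep p.1 h11 hp1b] at hinv
    exact ⟨h11, hlt, hp2b, hinv⟩
  -- key residue computations
  have key1 : ∀ p ∈ S, a * (p.2 - p.1) % b + a * p.1 % b = b + a * p.2 % b := by
    intro p hp
    obtain ⟨h11, hlt, hp2b, hinv⟩ := hSfacts p hp
    have h1 : (a * (p.2 - p.1) % b + a * p.1 % b) % b = a * p.2 % b := by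
      rw [← Nat.add_mod, ← Nat.left_distrib, Nat.sub_add_cancel (le_of_lt hlt)]
    have b1 : a * (p.2 - p.1) % b < b := Nat.mod_lt _ hb0
    have b2 : a * p.1 % b < b := Nat.mod_lt _ hb0
    have b3 : 1 ≤ a * (p.2 - p.1) % b :=
      Nat.pos_of_ne_zero (hrpos _ (by omega) (by omega))
    set sN := a * (p.2 - p.1) % b + a * p.1 % b with hsN
    by_cases hsb : sN < b
    · rw [Nat.mod_eq_of_lt hsb] at h1; omega
    · push_neg at hsb
      have h2 : sN % b = sN - b := by
        rw [Nat.mod_eq_sub_mod hsb, Nat.mod_eq_of_lt (by omega)]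
      omega
  have key2 : ∀ p ∈ S, a * (b - p.1) % b + a * p.1 % b = b := by
    intro p hp
    obtain ⟨h11, hlt, hp2b, hinv⟩ := hSfacts p hp
    have h1 : (a * (b - p.1) % b + a * p.1 % b) % b = 0 := by
      rw [← Nat.add_mod, ← Nat.left_distrib, Nat.sub_add_cancel (by omega : p.1 ≤ b),
        Nat.mul_mod_left]
    have b1 : a * (b - p.1) % b < b := Nat.mod_lt _ hb0
    have b2 : a * p.1 % b < b := Nat.mod_lt _ hb0
    have b3 : 1 ≤ a * (b - p.1) % b :=
      Nat.pos_of_ne_zero (hrpos _ (by omega) (by omega))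
    have b4 : 1 ≤ a * p.1 % b := Nat.pos_of_ne_zero (hrpos _ h11 (by omega))
    set sN := a * (b - p.1) % b + a * p.1 % b with hsN
    by_cases hsb : sN < b
    · rw [Nat.mod_eq_of_lt hsb] at h1; omega
    · push_neg at hsb
      have h2 : sN % b = sN - b := by
        rw [Nat.mod_eq_sub_mod hsb, Nat.mod_eq_of_lt (by omega)]
      omega
  apply three_dvd_card S (fun p => (p.2 - p.1, b - p.1))
  · -- maps S into S
    intro p hp
    obtain ⟨h11, hlt, hp2b, hinv⟩ := hSfacts p hp
    have hk1 := key1 p hp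
    have hk2 := key2 p hp
    have hrj : 1 ≤ a * p.2 % b := Nat.pos_of_ne_zero (hrpos _ (by omega) hp2b)
    have hri : a * p.1 % b < b := Nat.mod_lt _ hb0
    rw [hSdef, Finset.mem_filter, Finset.mem_product, Finset.mem_Icc, Finset.mem_Icc]
    refine ⟨⟨⟨by omega, by omega⟩, by omega, by omega⟩, by omega, ?_⟩
    have e1 : modRep a b (b - p.1) = a * (b - p.1) % b :=
      hmodRep _ (by omega) (by omega)
    have e2 : modRep a b (p.2 - p.1) = a * (p.2 - p.1) % b :=
      hmodRep _ (by omega) (by omega)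
    simp only [e1, e2]
    omega
  · -- order 3
    intro p hp
    obtain ⟨h11, hlt, hp2b, hinv⟩ := hSfacts p hp
    obtain ⟨i, j⟩ := p
    simp only [Prod.mk.injEq] at *
    constructor <;> omega
  · -- no fixed points
    intro p hp he
    obtain ⟨h11, hlt, hp2b, hinv⟩ := hSfacts p hp
    obtain ⟨i, j⟩ := p
    simp only [Prod.mk.injEq] at he ⊢
    exact h3 ⟨i, by omega⟩
end

section
/- For coprime positive integers a, b, the reciprocity law for inversion numbers holds: a·inv(a,b) + b·inv(b,a) = (a-1)(b-1)(a+b-1)/4. -/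
namespace Stmt7Aux
open Finset

lemma gauss1 (n : ℕ) : ∑ i ∈ Icc 1 n, (i:ℚ) = n*(n+1)/2 := by
  induction n with
  | zero => simp
  | succ n ih =>
    rw [Finset.sum_Icc_succ_top (by omega), ih]
    push_cast; ring

lemma gauss2 (n : ℕ) : ∑ i ∈ Icc 1 n, (i:ℚ)^2 = n*(n+1)*(2*n+1)/6 := by
  induction n with
  | zero => simp
  | succ n ih =>
    rw [Finset.sum_Icc_succ_top (by omega), ih]
    push_cast; ring

lemma mod_pos {a b k : ℕ} (h : Nat.Coprime a b) (hk1 : 1 ≤ k) (hk2 : k ≤ b - 1) :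
    0 < a * k % b := by
  rcases Nat.eq_zero_or_pos (a * k % b) with h0 | h0
  · exfalso
    have hdvd : b ∣ a * k := Nat.dvd_of_mod_eq_zero h0
    have : b ∣ k := (Nat.Coprime.dvd_of_dvd_mul_left (h.symm) hdvd)
    have := Nat.le_of_dvd (by omega) this
    omega
  · exact h0

/-- Quotient additivity with carry indicator. -/
lemma key {a b i j : ℕ} (h : Nat.Coprime a b) (hb : 1 ≤ b) (hi : 1 ≤ i) (hij : i < j)
    (hj : j ≤ b - 1) :
    a * j / b = a * i / b + a * (j - i) / b + (if a * j % b < a * i % b then 1 else 0) := by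
  have hd1 : 1 ≤ j - i := by omega
  have hd2 : j - i ≤ b - 1 := by omega
  have hi2 : i ≤ b - 1 := by omega
  have hri : 0 < a * i % b := mod_pos h hi hi2
  have hrd : 0 < a * (j - i) % b := mod_pos h hd1 hd2
  have hri' : a * i % b < b := Nat.mod_lt _ (by omega)
  have hrd' : a * (j - i) % b < b := Nat.mod_lt _ (by omega)
  have hdmi := Nat.div_add_mod (a * i) b
  have hdmd := Nat.div_add_mod (a * (j - i)) b
  set qi := a * i / b with hqi
  set ri := a * i % b with hri0
  set qd := a * (j - i) / b with hqd
  set rd := a * (j - i) % b with hrd0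
  by_cases hc : ri + rd < b
  · have huniq : a * j / b = qi + qd ∧ a * j % b = ri + rd := by
      rw [Nat.div_mod_unique (by omega)]
      constructor
      · zify [hij.le] at hdmi hdmd ⊢
        linear_combination hdmi + hdmd
      · exact hc
    rw [huniq.1, huniq.2]
    have : ¬ (ri + rd < ri) := by omega
    rw [if_neg this]
    omega
  · have huniq : a * j / b = qi + qd + 1 ∧ a * j % b = ri + rd - b := by
      rw [Nat.div_mod_unique (by omega)]
      constructor
      · zify [hij.le, show b ≤ ri + rd by omega] at hdmi hdmd ⊢
        linear_combination hdmi + hdmd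
      · omega
    rw [huniq.1, huniq.2]
    have : ri + rd - b < ri := by omega
    rw [if_pos this]

/-- Summing any function over the residues a*k % b, k in [1,b-1], equals summing over [1,b-1]. -/
lemma sum_mod {a b : ℕ} (h : Nat.Coprime a b) (hb : 1 ≤ b) (g : ℕ → ℚ) :
    ∑ k ∈ Icc 1 (b-1), g (a * k % b) = ∑ k ∈ Icc 1 (b-1), g k := by
  have hmaps : ∀ x ∈ Icc 1 (b-1), a * x % b ∈ Icc 1 (b-1) := by
    intro x hx
    rw [mem_Icc] at hx ⊢
    have h1 := mod_pos h hx.1 hx.2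
    have h2 : a * x % b < b := Nat.mod_lt _ (by omega)
    omega
  have hinj : ∀ x ∈ Icc 1 (b-1), ∀ y ∈ Icc 1 (b-1), a * x % b = a * y % b → x = y := by
    intro x hx y hy hxy
    rw [mem_Icc] at hx hy
    have hmod : x ≡ y [MOD b] :=
      Nat.ModEq.cancel_left_of_coprime (by rwa [Nat.Coprime, Nat.gcd_comm] at h) hxy
    have hxy2 : x % b = y % b := hmod
    rw [Nat.mod_eq_of_lt (by omega), Nat.mod_eq_of_lt (by omega)] at hxy2
    exact hxy2
  have himg : Finset.image (fun x => a * x % b) (Icc 1 (b-1)) = Icc 1 (b-1) :=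
    Finset.eq_of_subset_of_card_le (Finset.image_subset_iff.2 hmaps)
      (by rw [Finset.card_image_of_injOn hinj])
  conv_rhs => rw [← himg]
  rw [Finset.sum_image hinj]

/-- F k + F (b-k) = a - 1. -/
lemma F_add {a b k : ℕ} (h : Nat.Coprime a b) (ha : 1 ≤ a) (hk1 : 1 ≤ k) (hk2 : k ≤ b - 1) :
    a * k / b + a * (b - k) / b = a - 1 := by
  have hb : 2 ≤ b := by omega
  have hr1 : 0 < a * k % b := mod_pos h hk1 hk2
  have hr2 : a * k % b < b := Nat.mod_lt _ (by omega)
  have hdm := Nat.div_add_mod (a * k) b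
  have hq : a * k / b < a := by
    rw [Nat.div_lt_iff_lt_mul (by omega)]
    calc a * k ≤ a * (b-1) := Nat.mul_le_mul_left a hk2
      _ < a * b := by
          have : a * (b-1) < a * b := Nat.mul_lt_mul_left ha |>.mpr (by omega)
          exact this
  set q := a * k / b with hqdef
  set r := a * k % b with hrdef
  have huniq : a * (b - k) / b = a - q - 1 ∧ a * (b - k) % b = b - r := by
    rw [Nat.div_mod_unique (by omega)]
    constructor
    · zify [show k ≤ b by omega, show r ≤ b by omega, show q + 1 ≤ a by omega,
        show q ≤ a by omega, show 1 ≤ a - q by omega] at hdm ⊢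
      linear_combination -hdm
    · omega
  rw [huniq.1]
  omega

/-- S = sum of F k = (a-1)(b-1)/2. -/
lemma sumS {a b : ℕ} (h : Nat.Coprime a b) (ha : 1 ≤ a) (hb : 1 ≤ b) :
    ∑ k ∈ Icc 1 (b-1), ((a * k / b : ℕ) : ℚ) = ((a:ℚ)-1) * ((b:ℚ)-1) / 2 := by
  have hrev : ∑ k ∈ Icc 1 (b-1), ((a * k / b : ℕ) : ℚ)
      = ∑ k ∈ Icc 1 (b-1), ((a * (b - k) / b : ℕ) : ℚ) := by
    refine Finset.sum_bij' (fun k _ => b - k) (fun k _ => b - k) ?_ ?_ ?_ ?_ ?_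
    · intro x hx; simp only [mem_Icc] at hx ⊢; omega
    · intro x hx; simp only [mem_Icc] at hx ⊢; omega
    · intro x hx; simp only [mem_Icc] at hx ⊢; omega
    · intro x hx; simp only [mem_Icc] at hx ⊢; omega
    · intro x hx; simp only [mem_Icc] at hx
      have hxx : b - (b - x) = x := by omega
      rw [hxx]
  have hsum : (2:ℚ) * ∑ k ∈ Icc 1 (b-1), ((a * k / b : ℕ) : ℚ)
      = ∑ k ∈ Icc 1 (b-1), (((a:ℚ)) - 1) := by
    rw [two_mul]
    nth_rewrite 2 [hrev]
    rw [← Finset.sum_add_distrib]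
    apply Finset.sum_congr rfl
    intro k hk
    rw [mem_Icc] at hk
    have := F_add h ha hk.1 hk.2
    have hcast : ((a * k / b : ℕ) : ℚ) + ((a * (b - k) / b : ℕ) : ℚ) = ((a - 1 : ℕ) : ℚ) := by
      rw [← Nat.cast_add, this]
    rw [hcast]
    push_cast [ha]
    ring
  rw [Finset.sum_const, Nat.card_Icc, nsmul_eq_mul] at hsum
  have : ((b - 1 + 1 - 1 : ℕ) : ℚ) = (b:ℚ) - 1 := by
    have h2 : b - 1 + 1 - 1 = b - 1 := by omega
    rw [h2, Nat.cast_sub hb, Nat.cast_one]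
  rw [this] at hsum
  linarith

def Kq (a b : ℕ) : ℚ := ∑ k ∈ Icc 1 (b-1), (k:ℚ) * ((a * k / b : ℕ) : ℚ)
def Dq (a b : ℕ) : ℚ := ∑ k ∈ Icc 1 (b-1), ((a * k / b : ℕ) : ℚ)^2

lemma cast_pred {b : ℕ} (hb : 1 ≤ b) : ((b - 1 : ℕ) : ℚ) = (b:ℚ) - 1 := by
  rw [Nat.cast_sub hb, Nat.cast_one]

lemma Fk_lt {a b k : ℕ} (ha : 1 ≤ a) (hk2 : k ≤ b - 1) (hb : 1 ≤ b) : a * k / b < a := by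
  rw [Nat.div_lt_iff_lt_mul (by omega)]
  calc a * k ≤ a * (b-1) := Nat.mul_le_mul_left a hk2
    _ < a * b := (Nat.mul_lt_mul_left ha).mpr (by omega)

/-- Relation E3. -/
lemma relE3 {a b : ℕ} (h : Nat.Coprime a b) (ha : 1 ≤ a) (hb : 1 ≤ b) :
    (b:ℚ)^2 * Dq a b = (1 - (a:ℚ)^2) * (((b:ℚ)-1) * b * (2*b-1) / 6) + 2*a*b*Kq a b := by
  have h1 := sum_mod h hb (fun x => (x:ℚ)^2)
  have hexp : ∀ k ∈ Icc 1 (b-1),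
      ((a * k % b : ℕ) : ℚ)^2
        = (a:ℚ)^2*(k:ℚ)^2 - 2*(a:ℚ)*(b:ℚ)*((k:ℚ)*((a*k/b : ℕ):ℚ)) + (b:ℚ)^2*((a*k/b : ℕ):ℚ)^2 := by
    intro k hk
    have hdm := Nat.div_add_mod (a*k) b
    have hdm2 : (b:ℚ) * ((a*k/b : ℕ):ℚ) + ((a*k%b : ℕ):ℚ) = (a:ℚ)*(k:ℚ) := by
      exact_mod_cast congrArg (Nat.cast : ℕ → ℚ) hdm
    linear_combination (((a*k%b : ℕ):ℚ) + (a:ℚ)*(k:ℚ) - (b:ℚ)*((a*k/b : ℕ):ℚ)) * hdm2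
  rw [Finset.sum_congr rfl hexp] at h1
  have hsplit : ∑ k ∈ Icc 1 (b-1),
      ((a:ℚ)^2*(k:ℚ)^2 - 2*(a:ℚ)*(b:ℚ)*((k:ℚ)*((a*k/b : ℕ):ℚ)) + (b:ℚ)^2*((a*k/b : ℕ):ℚ)^2)
      = (a:ℚ)^2 * (∑ k ∈ Icc 1 (b-1), (k:ℚ)^2) - 2*(a:ℚ)*(b:ℚ)*Kq a b + (b:ℚ)^2*Dq a b := by
    rw [Finset.sum_add_distrib, Finset.sum_sub_distrib, ← Finset.mul_sum, ← Finset.mul_sum,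
      ← Finset.mul_sum]
    rfl
  rw [hsplit] at h1
  have hg : ∑ k ∈ Icc 1 (b-1), (k:ℚ)^2 = ((b:ℚ)-1)*(b:ℚ)*(2*(b:ℚ)-1)/6 := by
    rw [gauss2, cast_pred hb]
    push_cast
    ring
  rw [hg] at h1
  linear_combination h1

/-- Relation E4. -/
lemma relE4 {a b : ℕ} (h : Nat.Coprime a b) (ha : 1 ≤ a) (hb : 1 ≤ b) :
    Dq a b + ((a:ℚ)-1)*((b:ℚ)-1)/2 = ((b:ℚ)-1)*(a:ℚ)*((a:ℚ)-1) - 2 * Kq b a := by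
  have hdouble : ∑ k ∈ Icc 1 (b-1), ∑ l ∈ Icc 1 (a-1), (if b*l < a*k then (l:ℚ) else 0)
      = ∑ l ∈ Icc 1 (a-1), ∑ k ∈ Icc 1 (b-1), (if b*l < a*k then (l:ℚ) else 0) :=
    Finset.sum_comm
  have w1 : ∀ k ∈ Icc 1 (b-1), ∑ l ∈ Icc 1 (a-1), (if b*l < a*k then (l:ℚ) else 0)
      = (((a*k/b : ℕ):ℚ)^2 + ((a*k/b : ℕ):ℚ))/2 := by
    intro k hk
    rw [mem_Icc] at hk
    rw [← Finset.sum_filter]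
    have hf : (Icc 1 (a-1)).filter (fun l => b*l < a*k) = Icc 1 (a*k/b) := by
      ext l
      simp only [mem_filter, mem_Icc]
      constructor
      · rintro ⟨⟨h1, _⟩, h3⟩
        refine ⟨h1, (Nat.le_div_iff_mul_le (by omega : 0 < b)).2 ?_⟩
        rw [mul_comm]
        exact le_of_lt h3
      · rintro ⟨h1, h2⟩
        have hFa : a*k/b < a := Fk_lt ha hk.2 hb
        have hle : l * b ≤ a * k := (Nat.le_div_iff_mul_le (by omega : 0 < b)).1 h2
        have hne : b * l ≠ a * k := by
          intro heq
          have : a * k % b = 0 := by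
            rw [← heq, Nat.mul_mod_right]
          have := mod_pos h hk.1 hk.2
          omega
        refine ⟨⟨h1, by omega⟩, ?_⟩
        rw [mul_comm] at hle
        exact lt_of_le_of_ne hle hne
    rw [hf, gauss1]
    ring
  have w2 : ∀ l ∈ Icc 1 (a-1), ∑ k ∈ Icc 1 (b-1), (if b*l < a*k then (l:ℚ) else 0)
      = ((b:ℚ)-1)*(l:ℚ) - (l:ℚ)*((b*l/a : ℕ):ℚ) := by
    intro l hl
    rw [mem_Icc] at hl
    rw [← Finset.sum_filter]
    have hGb : b*l/a ≤ b - 1 := by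
      have : b*l/a < b := by
        rw [Nat.div_lt_iff_lt_mul (by omega : 0 < a)]
        calc b * l ≤ b * (a-1) := Nat.mul_le_mul_left b hl.2
          _ < b * a := (Nat.mul_lt_mul_left (by omega : 0 < b)).mpr (by omega)
      omega
    have hf2 : (Icc 1 (b-1)).filter (fun k => b*l < a*k) = Icc (b*l/a + 1) (b-1) := by
      ext k
      simp only [mem_filter, mem_Icc]
      constructor
      · rintro ⟨⟨h1, h2⟩, h3⟩
        refine ⟨?_, h2⟩
        by_contra hcon
        have hk_le : k ≤ b*l/a := Nat.not_lt.1 hcon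
        have hka := (Nat.le_div_iff_mul_le (by omega : 0 < a)).1 hk_le
        have h3' : b*l < k*a := by rw [mul_comm k a]; exact h3
        exact absurd (lt_of_le_of_lt hka h3') (lt_irrefl _)
      · rintro ⟨h1, h2⟩
        have hnot : ¬ (k ≤ b*l/a) := Nat.not_le.2 h1
        rw [Nat.le_div_iff_mul_le (by omega : 0 < a)] at hnot
        refine ⟨⟨le_trans (Nat.le_add_left _ _) h1, h2⟩, ?_⟩
        rw [mul_comm a k]
        exact Nat.not_le.1 hnot
    rw [hf2, Finset.sum_const, Nat.card_Icc, nsmul_eq_mul]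
    have hcard : ((b - 1 + 1 - (b*l/a + 1) : ℕ) : ℚ) = (b:ℚ) - 1 - ((b*l/a : ℕ):ℚ) := by
      have he : b - 1 + 1 - (b*l/a + 1) = (b-1) - b*l/a := by omega
      rw [he, Nat.cast_sub hGb, Nat.cast_sub hb, Nat.cast_one]
    rw [hcard]
    ring
  rw [Finset.sum_congr rfl w1, Finset.sum_congr rfl w2] at hdouble
  have hL : ∑ k ∈ Icc 1 (b-1), ((((a*k/b : ℕ):ℚ))^2 + ((a*k/b : ℕ):ℚ))/2
      = (Dq a b + (((a:ℚ)-1)*((b:ℚ)-1)/2))/2 := by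
    rw [← Finset.sum_div, Finset.sum_add_distrib]
    rw [sumS h ha hb]
    rfl
  have hR : ∑ l ∈ Icc 1 (a-1), (((b:ℚ)-1)*(l:ℚ) - (l:ℚ)*((b*l/a : ℕ):ℚ))
      = ((b:ℚ)-1)*(((a:ℚ)-1)*(a:ℚ)/2) - Kq b a := by
    rw [Finset.sum_sub_distrib, ← Finset.mul_sum, gauss1, cast_pred ha]
    have : (((a:ℚ)-1)*(((a:ℚ)-1)+1)/2) = ((a:ℚ)-1)*(a:ℚ)/2 := by ring
    rw [this]
    rfl
  rw [hL, hR] at hdouble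
  linarith
lemma Hj (g : ℕ → ℚ) (n : ℕ) :
    ∑ i ∈ Icc 1 n, ∑ j ∈ Icc 1 n, (if i < j then g j else 0)
      = ∑ k ∈ Icc 1 n, ((k:ℚ) - 1) * g k := by
  rw [Finset.sum_comm]
  apply Finset.sum_congr rfl
  intro j hj
  rw [mem_Icc] at hj
  rw [← Finset.sum_filter]
  have hf : (Icc 1 n).filter (fun i => i < j) = Icc 1 (j-1) := by
    ext i; simp only [mem_filter, mem_Icc]; omega
  rw [hf, Finset.sum_const, Nat.card_Icc, nsmul_eq_mul]
  have he : j - 1 + 1 - 1 = j - 1 := by omega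
  rw [he, cast_pred hj.1]

lemma Hi (g : ℕ → ℚ) (n : ℕ) :
    ∑ i ∈ Icc 1 n, ∑ j ∈ Icc 1 n, (if i < j then g i else 0)
      = ∑ k ∈ Icc 1 n, ((n:ℚ) - (k:ℚ)) * g k := by
  apply Finset.sum_congr rfl
  intro i hi
  rw [mem_Icc] at hi
  rw [← Finset.sum_filter]
  have hf : (Icc 1 n).filter (fun j => i < j) = Icc (i+1) n := by
    ext j; simp only [mem_filter, mem_Icc]; omega
  rw [hf, Finset.sum_const, Nat.card_Icc, nsmul_eq_mul]
  have he : n + 1 - (i+1) = n - i := by omega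
  rw [he, Nat.cast_sub hi.2]

lemma Hd (g : ℕ → ℚ) (n : ℕ) :
    ∑ i ∈ Icc 1 n, ∑ j ∈ Icc 1 n, (if i < j then g (j - i) else 0)
      = ∑ k ∈ Icc 1 n, ((n:ℚ) - (k:ℚ)) * g k := by
  have step1 : ∑ i ∈ Icc 1 n, ∑ j ∈ Icc 1 n, (if i < j then g (j - i) else 0)
      = ∑ p ∈ (Icc 1 n ×ˢ Icc 1 n).filter (fun p => p.1 < p.2), g (p.2 - p.1) := by
    rw [Finset.sum_filter, Finset.sum_product]
  have step2 : ∑ p ∈ (Icc 1 n ×ˢ Icc 1 n).filter (fun p => p.1 < p.2), g (p.2 - p.1)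
      = ∑ p ∈ (Icc 1 n ×ˢ Icc 1 n).filter (fun p => p.1 + p.2 ≤ n), g p.2 := by
    refine Finset.sum_bij' (fun p _ => (p.1, p.2 - p.1)) (fun p _ => (p.1, p.1 + p.2))
      ?_ ?_ ?_ ?_ ?_
    · rintro ⟨x, y⟩ hp
      simp only [mem_filter, mem_product, mem_Icc] at hp ⊢
      omega
    · rintro ⟨x, y⟩ hp
      simp only [mem_filter, mem_product, mem_Icc] at hp ⊢
      omega
    · rintro ⟨x, y⟩ hp
      simp only [mem_filter, mem_product, mem_Icc] at hp
      dsimp only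
      rw [Prod.mk.injEq]
      exact ⟨rfl, by omega⟩
    · rintro ⟨x, y⟩ hp
      simp only [mem_filter, mem_product, mem_Icc] at hp
      dsimp only
      rw [Prod.mk.injEq]
      exact ⟨rfl, by omega⟩
    · rintro ⟨x, y⟩ _
      rfl
  have step3 : ∑ p ∈ (Icc 1 n ×ˢ Icc 1 n).filter (fun p => p.1 + p.2 ≤ n), g p.2
      = ∑ k ∈ Icc 1 n, ((n:ℚ) - (k:ℚ)) * g k := by
    rw [Finset.sum_filter, Finset.sum_product, Finset.sum_comm]
    apply Finset.sum_congr rfl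
    intro j hj
    rw [mem_Icc] at hj
    rw [← Finset.sum_filter]
    have hf : (Icc 1 n).filter (fun i => i + j ≤ n) = Icc 1 (n - j) := by
      ext i; simp only [mem_filter, mem_Icc]; omega
    rw [hf]
    dsimp only
    rw [Finset.sum_const, Nat.card_Icc, nsmul_eq_mul]
    have he : n - j + 1 - 1 = n - j := by omega
    rw [he, Nat.cast_sub hj.2]
  rw [step1, step2, step3]

/-- The inversion number formula. -/
lemma invNum_eq {a b : ℕ} (h : Nat.Coprime a b) (ha : 1 ≤ a) (hb : 1 ≤ b) :
    (invNum a b : ℚ) = 3 * Kq a b - (2*(b:ℚ)-1)*((a:ℚ)-1)*((b:ℚ)-1)/2 := by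
  have hset : ((Icc 1 b ×ˢ Icc 1 b).filter
        (fun p => p.1 < p.2 ∧ modRep a b p.2 < modRep a b p.1))
      = ((Icc 1 (b-1) ×ˢ Icc 1 (b-1)).filter
        (fun p => p.1 < p.2 ∧ a * p.2 % b < a * p.1 % b)) := by
    ext ⟨i, j⟩
    simp only [mem_filter, mem_product, mem_Icc]
    simp only [modRep]
    constructor
    · rintro ⟨⟨⟨hi1, hi2⟩, hj1, hj2⟩, hij, hm⟩
      have hj' : j ≤ b - 1 := by
        by_contra hc
        have hjb : j = b := by omega
        have h0 : a * j % b = 0 := by rw [hjb]; exact Nat.mul_mod_left a b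
        rw [if_pos h0] at hm
        have hle : (if a * i % b = 0 then b else a * i % b) ≤ b := by
          split
          · exact le_rfl
          · exact le_of_lt (Nat.mod_lt _ (by omega))
        omega
      have hi' : i ≤ b - 1 := by omega
      have hmi : ¬ (a * i % b = 0) := (mod_pos h hi1 hi').ne'
      have hmj : ¬ (a * j % b = 0) := (mod_pos h hj1 hj').ne'
      rw [if_neg hmi, if_neg hmj] at hm
      exact ⟨⟨⟨hi1, hi'⟩, hj1, hj'⟩, hij, hm⟩
    · rintro ⟨⟨⟨hi1, hi2⟩, hj1, hj2⟩, hij, hm⟩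
      have hmi : ¬ (a * i % b = 0) := (mod_pos h hi1 hi2).ne'
      have hmj : ¬ (a * j % b = 0) := (mod_pos h hj1 hj2).ne'
      rw [if_neg hmi, if_neg hmj]
      exact ⟨⟨⟨hi1, by omega⟩, hj1, by omega⟩, hij, hm⟩
  have hcard : (invNum a b : ℚ)
      = ∑ p ∈ Icc 1 (b-1) ×ˢ Icc 1 (b-1),
          (if p.1 < p.2 ∧ a * p.2 % b < a * p.1 % b then (1:ℚ) else 0) := by
    rw [invNum, hset, Finset.card_filter]
    push_cast
    rfl
  have hcong : ∀ p ∈ Icc 1 (b-1) ×ˢ Icc 1 (b-1),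
      (if p.1 < p.2 ∧ a * p.2 % b < a * p.1 % b then (1:ℚ) else 0)
        = (if p.1 < p.2 then
            ((a*p.2/b : ℕ):ℚ) - ((a*p.1/b : ℕ):ℚ) - ((a*(p.2-p.1)/b : ℕ):ℚ) else 0) := by
    rintro ⟨i, j⟩ hp
    simp only [mem_product, mem_Icc] at hp
    by_cases hij : i < j
    · have hk := key h hb hp.1.1 hij hp.2.2
      have hkq : ((a*j/b : ℕ):ℚ)
          = ((a*i/b : ℕ):ℚ) + ((a*(j-i)/b : ℕ):ℚ)
            + (if a*j % b < a*i % b then (1:ℚ) else 0) := by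
        have := congrArg (Nat.cast : ℕ → ℚ) hk
        push_cast at this
        split_ifs at this ⊢ with hm
        · push_cast at this; linarith
        · push_cast at this; linarith
      simp only [hij, true_and, if_true]
      split_ifs with hm
      · rw [if_pos hm] at hkq; linarith
      · rw [if_neg hm] at hkq; linarith
    · simp [hij]
  rw [hcard, Finset.sum_congr rfl hcong, Finset.sum_product]
  have e1 : ∀ i ∈ Icc 1 (b-1),
      (∑ j ∈ Icc 1 (b-1), (if i < j then
          ((a*j/b : ℕ):ℚ) - ((a*i/b : ℕ):ℚ) - ((a*(j-i)/b : ℕ):ℚ) else 0))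
      = (∑ j ∈ Icc 1 (b-1), (if i < j then ((a*j/b : ℕ):ℚ) else 0))
        - (∑ j ∈ Icc 1 (b-1), (if i < j then ((a*i/b : ℕ):ℚ) else 0))
        - (∑ j ∈ Icc 1 (b-1), (if i < j then ((a*(j-i)/b : ℕ):ℚ) else 0)) := by
    intro i _
    rw [← Finset.sum_sub_distrib, ← Finset.sum_sub_distrib]
    apply Finset.sum_congr rfl
    intro j _
    split_ifs <;> ring
  rw [Finset.sum_congr rfl e1, Finset.sum_sub_distrib, Finset.sum_sub_distrib]
  rw [Hj (fun k => ((a*k/b : ℕ):ℚ)) (b-1), Hi (fun k => ((a*k/b : ℕ):ℚ)) (b-1),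
    Hd (fun k => ((a*k/b : ℕ):ℚ)) (b-1)]
  rw [cast_pred hb]
  have e2 : ∑ k ∈ Icc 1 (b-1), ((k:ℚ) - 1) * ((a*k/b : ℕ):ℚ)
      - ∑ k ∈ Icc 1 (b-1), ((b:ℚ) - 1 - (k:ℚ)) * ((a*k/b : ℕ):ℚ)
      - ∑ k ∈ Icc 1 (b-1), ((b:ℚ) - 1 - (k:ℚ)) * ((a*k/b : ℕ):ℚ)
      = 3 * Kq a b - (2*(b:ℚ)-1) * (∑ k ∈ Icc 1 (b-1), ((a*k/b : ℕ):ℚ)) := by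
    rw [Kq, Finset.mul_sum, Finset.mul_sum, ← Finset.sum_sub_distrib, ← Finset.sum_sub_distrib,
      ← Finset.sum_sub_distrib]
    apply Finset.sum_congr rfl
    intro k _
    ring
  rw [e2, sumS h ha hb]
  ring


end Stmt7Aux

theorem stmt7 (a b : ℕ) (ha : 1 ≤ a) (hb : 1 ≤ b) (h : Nat.Coprime a b) :
    (a : ℚ) * invNum a b + (b : ℚ) * invNum b a =
      ((a : ℚ) - 1) * ((b : ℚ) - 1) * ((a : ℚ) + b - 1) / 4 := by
  have e1 := Stmt7Aux.invNum_eq h ha hb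
  have e2 := Stmt7Aux.invNum_eq h.symm hb ha
  have e3 := Stmt7Aux.relE3 h ha hb
  have e4 := Stmt7Aux.relE4 h ha hb
  have hb0 : (b:ℚ) ≠ 0 := Nat.cast_ne_zero.2 (by omega)
  have e3' : (b:ℚ) * Stmt7Aux.Dq a b - 2*(a:ℚ)*Stmt7Aux.Kq a b
      = (1 - (a:ℚ)^2) * (((b:ℚ)-1) * (2*(b:ℚ)-1) / 6) := by
    apply mul_left_cancel₀ hb0
    linear_combination e3
  linear_combination (a:ℚ) * e1 + (b:ℚ) * e2 - (3/2) * e3' + (3*(b:ℚ)/2) * e4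
end

section
/- For an odd integer b ≥ 3, inv(2,b) = (b²-1)/8. -/
lemma modRep_lt_top (m x : ℕ) (h1 : 1 ≤ x) (h2 : x ≤ 2*m) :
    modRep 2 (2*m+1) x = if x ≤ m then 2*x else 2*x - (2*m+1) := by
  unfold modRep
  rcases le_or_gt x m with h | h
  · have hmod : 2*x % (2*m+1) = 2*x := Nat.mod_eq_of_lt (by omega)
    rw [hmod, if_neg (by omega), if_pos h]
  · have hmod : 2*x % (2*m+1) = 2*x - (2*m+1) := by
      rw [Nat.mod_eq_sub_mod (by omega)]
      exact Nat.mod_eq_of_lt (by omega)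
    rw [hmod, if_neg (by omega), if_neg (by omega)]

lemma modRep_top (m : ℕ) : modRep 2 (2*m+1) (2*m+1) = 2*m+1 := by
  unfold modRep
  rw [if_pos (Nat.mul_mod_left 2 (2*m+1))]

lemma mem_iff (m i j : ℕ) (hi1 : 1 ≤ i) (hi2 : i ≤ 2*m+1)
    (hj1 : 1 ≤ j) (hj2 : j ≤ 2*m+1) :
    (i < j ∧ modRep 2 (2*m+1) j < modRep 2 (2*m+1) i) ↔
    (1 ≤ i ∧ i ≤ m ∧ m+1 ≤ j ∧ j ≤ m + i) := by
  rcases eq_or_lt_of_le hj2 with hj | hj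
  · -- j = 2m+1: modRep j = 2m+1 is maximal, no inversion
    subst hj
    rw [modRep_top]
    rcases eq_or_lt_of_le hi2 with hi | hi
    · rw [hi, modRep_top]; omega
    · rw [modRep_lt_top m i hi1 (by omega)]
      split_ifs <;> omega
  · have hj' : j ≤ 2*m := by omega
    rw [modRep_lt_top m j hj1 hj']
    rcases eq_or_lt_of_le hi2 with hi | hi
    · rw [hi, modRep_top]
      split_ifs <;> omega
    · rw [modRep_lt_top m i hi1 (by omega)]
      split_ifs <;> omega

lemma invNum_two (m : ℕ) :
    invNum 2 (2*m+1) = ∑ i ∈ Finset.Icc 1 m, i := by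
  have hS : ((Finset.Icc 1 (2*m+1) ×ˢ Finset.Icc 1 (2*m+1)).filter
      (fun p => p.1 < p.2 ∧ modRep 2 (2*m+1) p.2 < modRep 2 (2*m+1) p.1))
      = (Finset.Icc 1 m).biUnion (fun i => ({i} : Finset ℕ) ×ˢ Finset.Icc (m+1) (m+i)) := by
    ext ⟨i, j⟩
    simp only [Finset.mem_filter, Finset.mem_product, Finset.mem_Icc,
      Finset.mem_biUnion, Finset.mem_singleton]
    constructor
    · rintro ⟨⟨⟨hi1, hi2⟩, hj1, hj2⟩, h⟩
      rw [mem_iff m i j hi1 hi2 hj1 hj2] at h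
      exact ⟨i, ⟨h.1, h.2.1⟩, rfl, h.2.2.1, h.2.2.2⟩
    · rintro ⟨a, ⟨ha1, ha2⟩, rfl, hj1, hj2⟩
      refine ⟨⟨⟨ha1, by omega⟩, by omega, by omega⟩, ?_⟩
      rw [mem_iff m i j ha1 (by omega) (by omega) (by omega)]
      exact ⟨ha1, ha2, hj1, hj2⟩
  rw [invNum, hS, Finset.card_biUnion]
  · refine Finset.sum_congr rfl fun i hi => ?_
    simp only [Finset.mem_Icc] at hi
    rw [Finset.card_product, Finset.card_singleton, Nat.card_Icc]
    omega
  · intro a _ b _ hab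
    simp only [Finset.disjoint_left, Finset.mem_product, Finset.mem_singleton]
    rintro ⟨x, y⟩ ⟨rfl, _⟩ ⟨rfl, _⟩
    exact hab rfl

theorem stmt8 (b : ℕ) (hb : 3 ≤ b) (hodd : Odd b) :
    (invNum 2 b : ℚ) = ((b : ℚ) ^ 2 - 1) / 8 := by
  obtain ⟨m, hm⟩ : ∃ m, b = 2*m+1 := by
    obtain ⟨k, hk⟩ := hodd; exact ⟨k, by omega⟩
  subst hm
  clear hb hodd
  have hsum : (∑ i ∈ Finset.Icc 1 m, i) * 2 = m * (m+1) := by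
    induction m with
    | zero => simp
    | succ n ih =>
      rw [Finset.sum_Icc_succ_top (by omega), add_mul, ih]
      ring
  have h8 : 8 * invNum 2 (2*m+1) = (2*m+1)^2 - 1 := by
    rw [invNum_two]
    have := hsum
    ring_nf
    ring_nf at this
    omega
  have hc := congrArg (Nat.cast : ℕ → ℚ) h8
  have hle : 1 ≤ (2*m+1)^2 := by
    have : (2*m+1)^2 = 4*m*m+4*m+1 := by ring
    omega
  push_cast [Nat.cast_sub hle] at hc
  push_cast
  linarith
end

section
/- For an odd integer b ≥ 3, inv(b-2, b) = (3b² - 12b + 9)/8. -/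
lemma modRep_eq (m : ℕ) (hm : 1 ≤ m) (x : ℕ) (hx1 : 1 ≤ x) (hx2 : x ≤ 2*m+1) :
    modRep (2*m+1-2) (2*m+1) x =
      if x ≤ m then 2*m+1-2*x else if x ≤ 2*m then 2*(2*m+1)-2*x else 2*m+1 := by
  unfold modRep
  rcases le_or_gt x m with h1 | h1
  · have key : (2*m+1-2)*x = (2*m+1)*(x-1) + (2*m+1-2*x) := by
      zify [hx1, show 2 ≤ 2*m+1 by omega, show 2*x ≤ 2*m+1 by omega]; ring
    rw [key, Nat.mul_add_mod, Nat.mod_eq_of_lt (by omega)]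
    rw [if_neg (by omega), if_pos h1]
  · rcases le_or_gt x (2*m) with h2 | h2
    · have key : (2*m+1-2)*x = (2*m+1)*(x-2) + (2*(2*m+1)-2*x) := by
        zify [show 2 ≤ x by omega, show 2 ≤ 2*m+1 by omega, show 2*x ≤ 2*(2*m+1) by omega]; ring
      rw [key, Nat.mul_add_mod, Nat.mod_eq_of_lt (by omega)]
      rw [if_neg (by omega), if_neg (by omega), if_pos h2]
    · have hx : x = 2*m+1 := by omega
      subst hx
      rw [Nat.mul_mod_left, if_pos rfl, if_neg (by omega), if_neg (by omega)]

lemma inner_count (m : ℕ) (hm : 1 ≤ m) (i : ℕ) (hi : i ∈ Finset.Ioc 0 (2*m+1)) :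
    (∑ j ∈ Finset.Icc 1 (2*m+1),
      if i < j ∧ modRep (2*m+1-2) (2*m+1) j < modRep (2*m+1-2) (2*m+1) i then (1:ℕ) else 0)
    = (if i ≤ m then 2*(m-i) else 2*m - i) := by
  simp only [Finset.mem_Ioc] at hi
  have hIcc : Finset.Icc 1 (2*m+1) = Finset.Ioc 0 (2*m+1) := by ext x; simp; omega
  rw [hIcc, ← Finset.sum_Ioc_consecutive _ (Nat.zero_le m) (by omega : m ≤ 2*m+1),
    ← Finset.sum_Ioc_consecutive _ (by omega : m ≤ 2*m) (by omega : 2*m ≤ 2*m+1)]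
  have hlast : Finset.Ioc (2*m) (2*m+1) = {2*m+1} := by ext x; simp [Nat.lt_succ_iff]
  have hfi := modRep_eq m hm i hi.1 hi.2
  rcases le_or_gt i m with h1 | h1
  · rw [if_pos h1] at hfi ⊢
    have p1 : (∑ j ∈ Finset.Ioc 0 m,
        if i < j ∧ modRep (2*m+1-2) (2*m+1) j < modRep (2*m+1-2) (2*m+1) i then (1:ℕ) else 0)
        = m - i := by
      have hiff : ∀ j ∈ Finset.Ioc 0 m,
          ((i < j ∧ modRep (2*m+1-2) (2*m+1) j < modRep (2*m+1-2) (2*m+1) i) ↔ i < j) := by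
        intro j hj
        simp only [Finset.mem_Ioc] at hj
        rw [hfi, modRep_eq m hm j hj.1 (by omega), if_pos hj.2]
        omega
      rw [← Finset.card_filter, Finset.filter_congr hiff,
        show Finset.filter (fun j => i < j) (Finset.Ioc 0 m) = Finset.Ioc i m by ext x; simp; omega,
        Nat.card_Ioc]
    have p2 : (∑ j ∈ Finset.Ioc m (2*m),
        if i < j ∧ modRep (2*m+1-2) (2*m+1) j < modRep (2*m+1-2) (2*m+1) i then (1:ℕ) else 0)
        = m - i := by
      have hiff : ∀ j ∈ Finset.Ioc m (2*m),
          ((i < j ∧ modRep (2*m+1-2) (2*m+1) j < modRep (2*m+1-2) (2*m+1) i) ↔ m + i < j) := by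
        intro j hj
        simp only [Finset.mem_Ioc] at hj
        rw [hfi, modRep_eq m hm j (by omega) (by omega), if_neg (by omega), if_pos hj.2]
        omega
      rw [← Finset.card_filter, Finset.filter_congr hiff,
        show Finset.filter (fun j => m + i < j) (Finset.Ioc m (2*m)) = Finset.Ioc (m+i) (2*m) by ext x; simp; omega,
        Nat.card_Ioc]
      omega
    have p3 : (∑ j ∈ Finset.Ioc (2*m) (2*m+1),
        if i < j ∧ modRep (2*m+1-2) (2*m+1) j < modRep (2*m+1-2) (2*m+1) i then (1:ℕ) else 0)
        = 0 := by
      rw [hlast, Finset.sum_singleton, if_neg]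
      rw [hfi, modRep_eq m hm (2*m+1) (by omega) (by omega), if_neg (by omega), if_neg (by omega)]
      omega
    omega
  · rw [if_neg (by omega)] at hfi
    rw [if_neg (by omega)]
    rcases le_or_gt i (2*m) with h2 | h2
    · rw [if_pos h2] at hfi
      have p1 : (∑ j ∈ Finset.Ioc 0 m,
          if i < j ∧ modRep (2*m+1-2) (2*m+1) j < modRep (2*m+1-2) (2*m+1) i then (1:ℕ) else 0)
          = 0 := by
        apply Finset.sum_eq_zero
        intro j hj
        simp only [Finset.mem_Ioc] at hj
        rw [if_neg (by omega)]
      have p2 : (∑ j ∈ Finset.Ioc m (2*m),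
          if i < j ∧ modRep (2*m+1-2) (2*m+1) j < modRep (2*m+1-2) (2*m+1) i then (1:ℕ) else 0)
          = 2*m - i := by
        have hiff : ∀ j ∈ Finset.Ioc m (2*m),
            ((i < j ∧ modRep (2*m+1-2) (2*m+1) j < modRep (2*m+1-2) (2*m+1) i) ↔ i < j) := by
          intro j hj
          simp only [Finset.mem_Ioc] at hj
          rw [hfi, modRep_eq m hm j (by omega) (by omega), if_neg (by omega), if_pos hj.2]
          omega
        rw [← Finset.card_filter, Finset.filter_congr hiff,
          show Finset.filter (fun j => i < j) (Finset.Ioc m (2*m)) = Finset.Ioc i (2*m) by ext x; simp; omega,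
          Nat.card_Ioc]
      have p3 : (∑ j ∈ Finset.Ioc (2*m) (2*m+1),
          if i < j ∧ modRep (2*m+1-2) (2*m+1) j < modRep (2*m+1-2) (2*m+1) i then (1:ℕ) else 0)
          = 0 := by
        rw [hlast, Finset.sum_singleton, if_neg]
        rw [hfi, modRep_eq m hm (2*m+1) (by omega) (by omega), if_neg (by omega), if_neg (by omega)]
        omega
      omega
    · have hi2 : i = 2*m+1 := by omega
      have : ∀ S : Finset ℕ, (∀ j ∈ S, j ≤ 2*m+1) →
          (∑ j ∈ S, if i < j ∧ modRep (2*m+1-2) (2*m+1) j < modRep (2*m+1-2) (2*m+1) i then (1:ℕ) else 0) = 0 := by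
        intro S hS
        apply Finset.sum_eq_zero
        intro j hj
        rw [if_neg (by have := hS j hj; omega)]
      rw [this _ (fun j hj => by simp at hj; omega), this _ (fun j hj => by simp at hj; omega),
        this _ (fun j hj => by simp at hj; omega)]
      omega

theorem stmt9 (b : ℕ) (hb : 3 ≤ b) (hodd : Odd b) :
    (invNum (b - 2) b : ℚ) = (3 * (b : ℚ) ^ 2 - 12 * b + 9) / 8 := by
  obtain ⟨m, hm⟩ := hodd
  have hm1 : 1 ≤ m := by omega
  have hb2 : b = 2*m+1 := by omega
  subst hb2
  have hN : invNum (2*m+1-2) (2*m+1) =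
      ∑ i ∈ Finset.Ioc 0 (2*m+1), (if i ≤ m then 2*(m-i) else 2*m - i) := by
    rw [invNum, Finset.card_filter, Finset.sum_product]
    have hIcc : Finset.Icc 1 (2*m+1) = Finset.Ioc 0 (2*m+1) := by ext x; simp; omega
    rw [hIcc]
    exact Finset.sum_congr rfl (fun i hi => by
      rw [← hIcc]; exact inner_count m hm1 i hi)
  -- split the outer sum
  rw [← Finset.sum_Ioc_consecutive _ (Nat.zero_le m) (by omega : m ≤ 2*m+1)] at hN
  have e1 : (∑ i ∈ Finset.Ioc 0 m, (if i ≤ m then 2*(m-i) else 2*m - i))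
      = ∑ i ∈ Finset.Ioc 0 m, 2*(m-i) := by
    apply Finset.sum_congr rfl; intro i hi; simp only [Finset.mem_Ioc] at hi
    rw [if_pos hi.2]
  have e2 : (∑ i ∈ Finset.Ioc m (2*m+1), (if i ≤ m then 2*(m-i) else 2*m - i))
      = ∑ i ∈ Finset.Ioc m (2*m+1), (2*m - i) := by
    apply Finset.sum_congr rfl; intro i hi; simp only [Finset.mem_Ioc] at hi
    rw [if_neg (by omega)]
  rw [e1, e2] at hN
  have hIoc1 : Finset.Ioc 0 m = Finset.Ico 1 (m+1) := by ext x; simp; omega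
  have hIoc2 : Finset.Ioc m (2*m+1) = Finset.Ico (m+1) (2*m+2) := by ext x; simp; omega
  rw [hIoc1, hIoc2, Finset.sum_Ico_eq_sum_range, Finset.sum_Ico_eq_sum_range] at hN
  simp only [Nat.add_sub_cancel, show 2*m+2 - (m+1) = m+1 by omega] at hN
  have c1 : (∑ k ∈ Finset.range m, 2*(m - (1+k))) = ∑ k ∈ Finset.range m, 2*(m-1-k) := by
    apply Finset.sum_congr rfl; intro k _; omega
  have c2 : (∑ k ∈ Finset.range (m+1), (2*m - (m+1+k))) = ∑ k ∈ Finset.range (m+1), (m-1-k) := by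
    apply Finset.sum_congr rfl; intro k _; omega
  rw [c1, c2, Finset.sum_range_succ, show m-1-m = 0 by omega,
    Finset.sum_range_reflect (fun k => 2*k) m, Finset.sum_range_reflect (fun k => k) m] at hN
  have gauss := Finset.sum_range_id_mul_two m
  have h2N : 2 * invNum (2*m+1-2) (2*m+1) = 3 * (m * (m-1)) := by
    rw [hN, ← Finset.mul_sum]
    omega
  have hq := congrArg (Nat.cast : ℕ → ℚ) h2N
  push_cast [Nat.cast_sub hm1] at hq
  rw [show 2*m-1 = 2*m+1-2 from by omega] at hq
  set N := (invNum (2*m+1-2) (2*m+1) : ℚ) with hNdef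
  rw [eq_div_iff (by norm_num : (8:ℚ) ≠ 0)]
  push_cast
  nlinarith [hq]
end

section
/- If b ≡ 2 (mod 4) and gcd(a,b) = 1, then inv(a,b) is even. -/
open Equiv Equiv.Perm Finset

lemma sign_eq_pow_inversions {n : ℕ} (hn : 2 ≤ n) (f : Perm (Fin n)) :
    Perm.sign f = (-1 : ℤˣ) ^ (((univ ×ˢ univ).filter
      (fun p : Fin n × Fin n => p.1 < p.2 ∧ f p.2 < f p.1)).card) := by
  have hs : Function.Surjective (MonoidHom.mk' signAux signAux_mul : Perm (Fin n) →* ℤˣ) := by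
    intro u
    rcases Int.units_eq_one_or u with rfl | rfl
    · exact ⟨1, signAux_one n⟩
    · exact ⟨Equiv.swap ⟨0, by omega⟩ ⟨1, by omega⟩,
        signAux_swap (by simp [Fin.ext_iff])⟩
  have hsgn : Perm.sign f = signAux f :=
    (DFunLike.congr_fun (eq_sign_of_surjective_hom hs) f).symm
  rw [hsgn]
  unfold signAux
  have hcong : ∀ x ∈ finPairsLT n, (if f x.1 ≤ f x.2 then (-1 : ℤˣ) else 1)
      = (if f x.1 < f x.2 then (-1 : ℤˣ) else 1) := by
    intro x hx
    have hne : f x.1 ≠ f x.2 := fun hEq =>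
      (ne_of_lt (mem_finPairsLT.mp hx)) (f.injective hEq.symm)
    by_cases hlt : f x.1 < f x.2
    · rw [if_pos hlt.le, if_pos hlt]
    · rw [if_neg (fun hle => hlt (lt_of_le_of_ne hle hne)), if_neg hlt]
  rw [Finset.prod_congr rfl hcong, Finset.prod_ite, Finset.prod_const, Finset.prod_const,
    one_pow, mul_one]
  congr 1
  apply Finset.card_bij' (fun x _ => (x.2, x.1)) (fun p _ => (⟨p.2, p.1⟩ : Σ _ : Fin n, Fin n))
  · intro x hx
    rw [Finset.mem_filter] at hx
    refine Finset.mem_filter.mpr ⟨Finset.mem_product.mpr ⟨mem_univ _, mem_univ _⟩,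
      mem_finPairsLT.mp hx.1, hx.2⟩
  · intro p hp
    rw [Finset.mem_filter, Finset.mem_product] at hp
    exact Finset.mem_filter.mpr ⟨mem_finPairsLT.mpr hp.2.1, hp.2.2⟩
  · intro x _; rfl
  · intro p _; rfl

lemma sign_mul_zmod (m a : ℕ) [NeZero (2 * m)] (hm : Odd m) (h : Nat.Coprime a (2 * m)) :
    Perm.sign (MulAction.toPerm (ZMod.unitOfCoprime a h) : Perm (ZMod (2 * m))) = 1 := by
  haveI : NeZero m := ⟨by rintro rfl; simp [Nat.odd_iff] at hm⟩
  have hcop : Nat.Coprime 2 m :=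
    (Nat.prime_two.coprime_iff_not_dvd).mpr (by rw [Nat.two_dvd_ne_zero]; exact Nat.odd_iff.mp hm)
  set crt := ZMod.chineseRemainder hcop with hcrt
  set σ : Perm (ZMod (2 * m)) := MulAction.toPerm (ZMod.unitOfCoprime a h) with hσ
  have ham : Nat.Coprime a m := Nat.Coprime.coprime_dvd_right ⟨2, by ring⟩ h
  set σm : Perm (ZMod m) := MulAction.toPerm (ZMod.unitOfCoprime a ham) with hσm
  have haodd : a % 2 = 1 :=
    Nat.odd_iff.mp (Nat.Coprime.odd_of_right (Nat.Coprime.coprime_dvd_right ⟨m, rfl⟩ h))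
  have ha2 : (a : ZMod 2) = 1 := by
    rw [← ZMod.natCast_mod a 2, haodd, Nat.cast_one]
  have key : (crt.toEquiv.symm.trans σ).trans crt.toEquiv
      = Equiv.prodCongrRight (fun _ : ZMod 2 => σm) := by
    apply Equiv.ext
    rintro ⟨x, y⟩
    show crt (σ (crt.symm (x, y))) = (x, σm y)
    have h1 : σ (crt.symm (x, y)) = (a : ZMod (2*m)) * crt.symm (x, y) := by
      simp [hσ, Units.smul_def, ZMod.coe_unitOfCoprime]
    have h3 : σm y = (a : ZMod m) * y := by
      simp [hσm, Units.smul_def, ZMod.coe_unitOfCoprime]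
    rw [h1, h3, map_mul, RingEquiv.apply_symm_apply, map_natCast]
    ext
    · simp [ha2]
    · simp
  have hs1 : Perm.sign σ = Perm.sign ((crt.toEquiv.symm.trans σ).trans crt.toEquiv) :=
    (Equiv.Perm.sign_symm_trans_trans σ crt.toEquiv).symm
  rw [hs1, key, Equiv.Perm.sign_prodCongrRight, Finset.prod_const]
  have hc : (Finset.univ : Finset (ZMod 2)).card = 2 := by simp [ZMod.card]
  rw [hc]
  exact Int.units_sq _

/-- shifted equiv between `Fin n` and `ZMod n`. -/
noncomputable def shiftEquiv' (n : ℕ) [NeZero n] : Fin n ≃ ZMod n where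
  toFun k := ((k.val + 1 : ℕ) : ZMod n)
  invFun y := ⟨(y - 1).val, ZMod.val_lt _⟩
  left_inv k := by
    apply Fin.ext
    have h1 : (((k.val + 1 : ℕ) : ZMod n) - 1) = ((k.val : ℕ) : ZMod n) := by
      push_cast; ring
    show ((((k.val + 1 : ℕ) : ZMod n) - 1)).val = k.val
    rw [h1, ZMod.val_cast_of_lt k.isLt]
  right_inv y := by
    show (((⟨(y - 1).val, ZMod.val_lt _⟩ : Fin n).val + 1 : ℕ) : ZMod n) = y
    push_cast
    rw [ZMod.natCast_val, ZMod.cast_id]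
    ring

theorem stmt12 (a b : ℕ) (hb : b % 4 = 2) (h : Nat.Coprime a b) :
    Even (invNum a b) := by
  obtain ⟨m, rfl⟩ : ∃ m, b = 2 * m := ⟨b / 2, by omega⟩
  have hm : Odd m := by rw [Nat.odd_iff]; omega
  haveI : NeZero (2 * m) := ⟨by omega⟩
  set n := 2 * m with hn
  have hn2 : 2 ≤ n := by omega
  set e := shiftEquiv' n with he
  set σ : Perm (ZMod n) := MulAction.toPerm (ZMod.unitOfCoprime a h) with hσ
  set f : Perm (Fin n) := (e.trans σ).trans e.symm with hf
  have key : ∀ k : Fin n, modRep a n (k.val + 1) = (f k).val + 1 := by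
    intro k
    have hefk : e (f k) = σ (e k) := by
      rw [hf]; simp
    have hcast : (((f k).val + 1 : ℕ) : ZMod n) = ((a * (k.val + 1) : ℕ) : ZMod n) := by
      have h1 : e (f k) = (((f k).val + 1 : ℕ) : ZMod n) := rfl
      have h2 : σ (e k) = ((a * (k.val + 1) : ℕ) : ZMod n) := by
        show (ZMod.unitOfCoprime a h : ZMod n) * (((k.val + 1 : ℕ) : ZMod n)) = _
        rw [ZMod.coe_unitOfCoprime]; push_cast; ring
      rw [← h1, ← h2, hefk]
    have hmod : ((f k).val + 1) % n = (a * (k.val + 1)) % n :=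
      (ZMod.natCast_eq_natCast_iff' _ _ _).mp hcast
    have hlt : (f k).val < n := (f k).isLt
    by_cases h0 : a * (k.val + 1) % n = 0
    · rw [modRep, if_pos h0]
      rw [h0] at hmod
      by_contra hne
      have hlt' : (f k).val + 1 < n := by omega
      rw [Nat.mod_eq_of_lt hlt'] at hmod; omega
    · rw [modRep, if_neg h0]
      have hne : (f k).val + 1 ≠ n := by
        intro hEq
        rw [hEq, Nat.mod_self] at hmod
        exact h0 hmod.symm
      rw [Nat.mod_eq_of_lt (by omega)] at hmod
      omega
  have key2 : ∀ i j : Fin n, f i < f j ↔ modRep a n (i.val + 1) < modRep a n (j.val + 1) := by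
    intro i j
    rw [Fin.lt_def, key i, key j]
    omega
  have hcard : invNum a n = ((univ ×ˢ univ).filter
      (fun p : Fin n × Fin n => p.1 < p.2 ∧ f p.2 < f p.1)).card := by
    rw [invNum]
    apply Finset.card_bij'
      (i := fun p hp => ((⟨p.1 - 1, by
          have h1 := (Finset.mem_product.mp (Finset.mem_filter.mp hp).1).1
          rw [Finset.mem_Icc] at h1; omega⟩ : Fin n),
        (⟨p.2 - 1, by
          have h1 := (Finset.mem_product.mp (Finset.mem_filter.mp hp).1).2
          rw [Finset.mem_Icc] at h1; omega⟩ : Fin n)))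
      (j := fun q _ => (q.1.val + 1, q.2.val + 1))
    case hi =>
      intro p hp
      rw [Finset.mem_filter] at hp ⊢
      obtain ⟨hmem, hp1, hp2⟩ := hp
      rw [Finset.mem_product, Finset.mem_Icc, Finset.mem_Icc] at hmem
      obtain ⟨⟨h11, h12⟩, h21, h22⟩ := hmem
      refine ⟨Finset.mem_product.mpr ⟨Finset.mem_univ _, Finset.mem_univ _⟩, ?_, ?_⟩
      · rw [Fin.lt_def]; simp only [Fin.val_mk]; omega
      · rw [key2]
        simp only [Fin.val_mk]
        rw [show p.2 - 1 + 1 = p.2 by omega, show p.1 - 1 + 1 = p.1 by omega]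
        exact hp2
    case left_inv =>
      intro q hq
      have hmem := (Finset.mem_filter.mp hq).1
      have h1 := Finset.mem_Icc.mp (Finset.mem_product.mp hmem).1
      have h2 := Finset.mem_Icc.mp (Finset.mem_product.mp hmem).2
      show (q.1 - 1 + 1, q.2 - 1 + 1) = q
      rw [show q.1 - 1 + 1 = q.1 by omega, show q.2 - 1 + 1 = q.2 by omega]
    case hj =>
      intro q hq
      rw [Finset.mem_filter] at hq ⊢
      obtain ⟨hmem, hq1, hq2⟩ := hq
      have hlt1 := q.1.isLt
      have hlt2 := q.2.isLt
      refine ⟨Finset.mem_product.mpr ⟨Finset.mem_Icc.mpr ⟨by omega, by omega⟩,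
        Finset.mem_Icc.mpr ⟨by omega, by omega⟩⟩, ?_, ?_⟩
      · rw [Fin.lt_def] at hq1; omega
      · exact (key2 q.2 q.1).mp hq2
    case right_inv =>
      intro p hp
      rw [Prod.ext_iff]
      exact ⟨Fin.ext (by simp), Fin.ext (by simp)⟩
  have hsign : Perm.sign f = 1 := by
    rw [hf, Equiv.Perm.sign_trans_trans_symm]
    exact sign_mul_zmod m a hm h
  rw [sign_eq_pow_inversions hn2 f] at hsign
  rw [hcard]
  by_contra hodd
  rw [Nat.not_even_iff_odd] at hodd
  rw [Odd.neg_one_pow hodd] at hsign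
  have : ((-1 : ℤˣ) : ℤ) = ((1 : ℤˣ) : ℤ) := congrArg Units.val hsign
  simp at this
end

section
/- If b ≡ 2 (mod 4), then f_b(-1) = φ(b), where f_b(x) = ∑_{gcd(a,b)=1, 1 ≤ a ≤ b} x^{inv(a,b)} and φ is Euler's totient function. -/
section Helpers
open Equiv Finset

lemma modRep_pos {a b x : ℕ} (hb : 0 < b) : 1 ≤ modRep a b x := by
  unfold modRep; split <;> omega

lemma modRep_le {a b x : ℕ} (hb : 0 < b) : modRep a b x ≤ b := by
  unfold modRep; split
  · omega
  · exact le_of_lt (Nat.mod_lt _ hb)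

lemma sign_eq_signAux {n : ℕ} (f : Perm (Fin n)) : Perm.sign f = Perm.signAux f := by
  induction f using Perm.swap_induction_on
  case _ => simp [Perm.signAux_one]
  case _ f x y hxy ih =>
    rw [Perm.sign_mul, Perm.signAux_mul, ih, Perm.sign_swap hxy, Perm.signAux_swap hxy]

lemma prod_ite_neg_one {γ : Type*} (s : Finset γ) (P : γ → Prop) [DecidablePred P] :
    ∏ x ∈ s, (if P x then (-1 : ℤˣ) else 1) = (-1) ^ (s.filter P).card := by
  rw [Finset.prod_ite, Finset.prod_const, Finset.prod_const, one_pow, mul_one]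

section
variable (a b : ℕ) [NeZero b]

lemma bpos : 0 < b := Nat.pos_of_ne_zero (NeZero.ne b)

/-- the equiv Fin b ≃ ZMod b sending x to x+1 -/
def eFin : Fin b ≃ ZMod b where
  toFun x := (((x : ℕ) + 1 : ℕ) : ZMod b)
  invFun y := ⟨(y.val + b - 1) % b, Nat.mod_lt _ (bpos b)⟩
  left_inv x := by
    have hb : 0 < b := bpos b
    ext
    simp only [ZMod.val_natCast]
    have hx : (x : ℕ) < b := x.2
    rcases Nat.lt_or_ge ((x : ℕ) + 1) b with h | h
    · rw [Nat.mod_eq_of_lt h]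
      have : (x : ℕ) + 1 + b - 1 = (x : ℕ) + b := by omega
      rw [this, Nat.add_mod_right, Nat.mod_eq_of_lt hx]
    · have : (x : ℕ) + 1 = b := by omega
      rw [this, Nat.mod_self]
      have : 0 + b - 1 = b - 1 := by omega
      rw [this, Nat.mod_eq_of_lt (by omega)]
      omega
  right_inv y := by
    have hb : 0 < b := bpos b
    show ((((y.val + b - 1) % b) + 1 : ℕ) : ZMod b) = y
    rw [Nat.cast_add, Nat.cast_one, ZMod.natCast_mod]
    have h1 : (y.val + b - 1 : ℕ) = y.val + (b - 1) := by omega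
    rw [h1, Nat.cast_add, Nat.cast_sub (by omega : 1 ≤ b), ZMod.natCast_self, Nat.cast_one]
    simp [ZMod.natCast_val, ZMod.cast_id]

lemma eFin_symm_val (y : ZMod b) : ((eFin b).symm y : ℕ) = (y.val + b - 1) % b := rfl

variable {a b} (h : a.Coprime b)

/-- multiplication by a as a permutation of ZMod b -/
def mulP : Perm (ZMod b) := (ZMod.unitOfCoprime a h).mulLeft

lemma mulP_val (x : Fin b) :
    ((((eFin b).trans (mulP h)).trans (eFin b).symm) x : ℕ) = modRep a b ((x : ℕ) + 1) - 1 := by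
  have hb : 0 < b := bpos b
  have : (((eFin b).trans (mulP h)).trans (eFin b).symm) x
      = (eFin b).symm ((mulP h) (eFin b x)) := rfl
  rw [this, eFin_symm_val]
  have : (mulP h) (eFin b x) = (((a * ((x:ℕ)+1) : ℕ) : ZMod b)) := by
    show (ZMod.unitOfCoprime a h : ZMod b) * _ = _
    rw [ZMod.coe_unitOfCoprime, show ((eFin b) x) = ((((x:ℕ)+1 : ℕ)) : ZMod b) from rfl]
    push_cast
    ring
  rw [this, ZMod.val_natCast]
  unfold modRep
  set r := a * ((x:ℕ)+1) % b with hr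
  have hrb : r < b := Nat.mod_lt _ hb
  rcases Nat.eq_zero_or_pos r with h0 | h0
  · rw [if_pos h0, h0]
    have : 0 + b - 1 = b - 1 := by omega
    rw [this, Nat.mod_eq_of_lt (by omega)]
  · rw [if_neg (by omega)]
    have : r + b - 1 = (r - 1) + b := by omega
    rw [this, Nat.add_mod_right, Nat.mod_eq_of_lt (by omega)]

lemma key : ((-1 : ℤˣ)) ^ invNum a b = Perm.sign (mulP h) := by
  have hb : 0 < b := bpos b
  set p : Perm (Fin b) := ((eFin b).trans (mulP h)).trans (eFin b).symm with hp
  have hs : Perm.sign p = Perm.sign (mulP h) := Perm.sign_trans_trans_symm _ _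
  rw [← hs, sign_eq_signAux]
  show _ = ∏ x ∈ Perm.finPairsLT b, if p x.1 ≤ p x.2 then (-1 : ℤˣ) else 1
  rw [prod_ite_neg_one]
  congr 1
  unfold invNum
  refine Finset.card_bij'
    (fun q _ => (⟨⟨(q.2 - 1) % b, Nat.mod_lt _ hb⟩, ⟨(q.1 - 1) % b, Nat.mod_lt _ hb⟩⟩ :
        Σ _ : Fin b, Fin b))
    (fun x _ => ((x.2 : ℕ) + 1, (x.1 : ℕ) + 1)) ?_ ?_ ?_ ?_
  · intro q hq
    simp only [Finset.mem_filter, Finset.mem_product, Finset.mem_Icc] at hq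
    obtain ⟨⟨⟨h11, h12⟩, h21, h22⟩, hlt, hinv⟩ := hq
    rw [Finset.mem_filter]
    constructor
    · rw [Equiv.Perm.mem_finPairsLT]
      show (q.1 - 1) % b < (q.2 - 1) % b
      rw [Nat.mod_eq_of_lt (by omega), Nat.mod_eq_of_lt (by omega)]
      omega
    · show p _ ≤ p _
      rw [Fin.le_def]
      have e1 := mulP_val h (⟨(q.2 - 1) % b, Nat.mod_lt _ hb⟩ : Fin b)
      have e2 := mulP_val h (⟨(q.1 - 1) % b, Nat.mod_lt _ hb⟩ : Fin b)
      rw [← hp] at e1 e2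
      rw [e1, e2]
      simp only [Nat.mod_eq_of_lt (show q.1 - 1 < b by omega),
        Nat.mod_eq_of_lt (show q.2 - 1 < b by omega)] at *
      rw [show q.2 - 1 + 1 = q.2 by omega, show q.1 - 1 + 1 = q.1 by omega]
      have := modRep_pos (a := a) (x := q.2) hb
      omega
  · intro x hx
    rw [Finset.mem_filter] at hx
    obtain ⟨hmem, hle⟩ := hx
    rw [Equiv.Perm.mem_finPairsLT] at hmem
    have hlt : (x.2 : ℕ) < (x.1 : ℕ) := hmem
    simp only [Finset.mem_filter, Finset.mem_product, Finset.mem_Icc]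
    have hx1 : (x.1 : ℕ) < b := x.1.2
    have hx2 : (x.2 : ℕ) < b := x.2.2
    refine ⟨⟨⟨by omega, by omega⟩, by omega, by omega⟩, by omega, ?_⟩
    rw [Fin.le_def] at hle
    rw [mulP_val h, mulP_val h] at hle
    have hne : modRep a b ((x.1 : ℕ) + 1) ≠ modRep a b ((x.2 : ℕ) + 1) := by
      intro he
      have : p x.1 = p x.2 := by
        apply Fin.ext
        have e1 := mulP_val h x.1
        have e2 := mulP_val h x.2
        rw [← hp] at e1 e2
        rw [e1, e2, he]
      have := p.injective this
      rw [this] at hlt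
      omega
    have := modRep_pos (a := a) (x := (x.1 : ℕ) + 1) hb
    have := modRep_pos (a := a) (x := (x.2 : ℕ) + 1) hb
    omega
  · intro q hq
    simp only [Finset.mem_filter, Finset.mem_product, Finset.mem_Icc] at hq
    obtain ⟨⟨⟨h11, h12⟩, h21, h22⟩, hlt, hinv⟩ := hq
    show ((q.1 - 1) % b + 1, (q.2 - 1) % b + 1) = q
    rw [Nat.mod_eq_of_lt (by omega), Nat.mod_eq_of_lt (by omega)]
    have : q = (q.1, q.2) := rfl
    rw [this]
    simp only [Prod.mk.injEq]
    omega
  · intro x hx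
    obtain ⟨x1, x2⟩ := x
    refine congrArg₂ (fun u v => (⟨u, v⟩ : Σ _ : Fin b, Fin b)) ?_ ?_
    · apply Fin.ext
      show ((x1 : ℕ) + 1 - 1) % b = (x1 : ℕ)
      rw [Nat.add_sub_cancel, Nat.mod_eq_of_lt x1.2]
    · apply Fin.ext
      show ((x2 : ℕ) + 1 - 1) % b = (x2 : ℕ)
      rw [Nat.add_sub_cancel, Nat.mod_eq_of_lt x2.2]
end


lemma signB {a m : ℕ} (hm : m % 2 = 1) [NeZero (2 * m)] (h : a.Coprime (2 * m)) :
    Equiv.Perm.sign (mulP h) = 1 := by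
  haveI : NeZero m := ⟨by omega⟩
  have hcop : Nat.Coprime 2 m := Nat.coprime_two_left.mpr ⟨m / 2, by omega⟩
  have ham : a.Coprime m := Nat.Coprime.coprime_dvd_right ⟨2, by ring⟩ h
  have ha2 : ((a : ZMod 2)) = 1 := by
    have h2 : a % 2 = 1 := by
      obtain ⟨k, hk⟩ := (Nat.coprime_two_right (n := a)).mp
        (Nat.Coprime.coprime_dvd_right ⟨m, rfl⟩ h)
      omega
    rw [← ZMod.natCast_mod, h2, Nat.cast_one]
  set crt := ZMod.chineseRemainder hcop with hcrt
  set ν : Perm (ZMod 2 × ZMod m) := (crt.toEquiv.symm.trans (mulP h)).trans crt.toEquiv with hν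
  have h1 : Equiv.Perm.sign ν = Equiv.Perm.sign (mulP h) := Equiv.Perm.sign_symm_trans_trans _ _
  have h2 : ν = Equiv.prodCongrRight (fun _ : ZMod 2 => mulP ham) := by
    apply Equiv.ext
    intro z
    show crt ((ZMod.unitOfCoprime a h : ZMod (2*m)) * crt.symm z) = _
    rw [ZMod.coe_unitOfCoprime, map_mul, RingEquiv.apply_symm_apply, map_natCast]
    show ((a : ZMod 2), (a : ZMod m)) * z = (z.1, (ZMod.unitOfCoprime a ham : ZMod m) * z.2)
    rw [ZMod.coe_unitOfCoprime, ha2, Prod.mk_mul_mk, one_mul]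
  rw [← h1, h2, Equiv.Perm.sign_prodCongrRight, Finset.prod_const, Finset.card_univ, ZMod.card,
    Int.units_sq]



end Helpers

theorem stmt14 (b : ℕ) (hb : b % 4 = 2) :
    ∑ a ∈ (Finset.Icc 1 b).filter (fun a => Nat.Coprime a b),
      ((-1 : ℤ)) ^ invNum a b = (Nat.totient b : ℤ) := by
  obtain ⟨m, rfl⟩ : ∃ m, b = 2 * m := ⟨b / 2, by omega⟩
  have hm : m % 2 = 1 := by omega
  haveI : NeZero (2 * m) := ⟨by omega⟩
  have hterm : ∀ a ∈ (Finset.Icc 1 (2*m)).filter (fun a => Nat.Coprime a (2*m)),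
      ((-1 : ℤ)) ^ invNum a (2*m) = 1 := by
    intro a ha
    have h : a.Coprime (2*m) := (Finset.mem_filter.mp ha).2
    have hk := key h
    rw [signB hm h] at hk
    have := congrArg Units.val hk
    simpa using this
  rw [Finset.sum_congr rfl hterm, Finset.sum_const, nsmul_eq_mul, mul_one]
  congr 1
  have hset : (Finset.Icc 1 (2*m)).filter (fun a => Nat.Coprime a (2*m))
      = (Finset.range (2*m)).filter ((2*m).Coprime) := by
    ext x
    simp only [Finset.mem_filter, Finset.mem_Icc, Finset.mem_range]
    constructor
    · rintro ⟨⟨h1, h2⟩, hc⟩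
      have hx : x ≠ 2*m := by
        rintro rfl
        have := (Nat.coprime_self _).mp hc
        omega
      exact ⟨by omega, hc.symm⟩
    · rintro ⟨h1, hc⟩
      have hx0 : x ≠ 0 := by
        rintro rfl
        rw [Nat.coprime_zero_right] at hc
        omega
      exact ⟨⟨by omega, by omega⟩, hc.symm⟩
  rw [hset, Nat.totient]
end
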